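/- arXiv:1504.08238 — 9 statements merged into one kernel-verified Lean document; each statement's English description precedes it below -/
import Mathlib

section
/- Let X and Y be Banach spaces over 𝕂 (= ℝ or ℂ), let Γ be an arbitrary nonempty set, let E be an invariant sequence space over X, and for each l ∈ Γ let E_l be a strongly invariant sequence space over Y. If f : X → Y is compatible with E_l for every l ∈ Γ, then the set G(E, f, (E_l)_{l∈Γ}) = { (x_j)_{j=1}^∞ ∈ E : (f(x_j))_{j=1}^∞ ∉ ⋃_{l∈Γ} E_l } is either empty or spaceable in E. -/
open scoped Classical

/-- The zero-deleted sequence `x⁰`: if `x` has infinitely many nonzero coordinates, the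
sequence of its nonzero coordinates in order; otherwise `0`. -/
noncomputable def zeroFree {X : Type*} [Zero X] (x : ℕ → X) : ℕ → X :=
  if {j | x j ≠ 0}.Infinite then fun k => x (Nat.nth (fun j => x j ≠ 0) k) else 0

/-- An invariant sequence space over a Banach space `X` (Definition 1.1 of the paper):
an infinite-dimensional Banach space of `X`-valued sequences such that
(b1) for `x` with `x⁰ ≠ 0`, `x ∈ E ↔ x⁰ ∈ E` and `‖x‖ ≤ K‖x⁰‖`, and
(b2) `‖x j‖ ≤ ‖x‖` for every `x ∈ E` and every `j`.  Completeness and closedness are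
expressed via the metric induced by the norm function. -/
structure InvariantSeqSpace (𝕂 : Type*) (X : Type*) [RCLike 𝕂]
    [NormedAddCommGroup X] [NormedSpace 𝕂 X] where
  carrier : Submodule 𝕂 (ℕ → X)
  norm : (ℕ → X) → ℝ
  norm_nonneg : ∀ x ∈ carrier, 0 ≤ norm x
  norm_eq_zero_iff : ∀ x ∈ carrier, (norm x = 0 ↔ x = 0)
  norm_smul : ∀ (a : 𝕂), ∀ x ∈ carrier, norm (a • x) = ‖a‖ * norm x
  norm_add_le : ∀ x ∈ carrier, ∀ y ∈ carrier, norm (x + y) ≤ norm x + norm y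
  complete : ∀ u : ℕ → ℕ → X, (∀ n, u n ∈ carrier) →
    (∀ ε : ℝ, 0 < ε → ∃ N, ∀ m ≥ N, ∀ n ≥ N, norm (u m - u n) < ε) →
    ∃ x ∈ carrier, ∀ ε : ℝ, 0 < ε → ∃ N, ∀ n ≥ N, norm (u n - x) < ε
  infiniteDimensional : ¬ Module.Finite 𝕂 carrier
  K : ℝ
  K_pos : 0 < K
  mem_iff_zeroFree_mem : ∀ x : ℕ → X, zeroFree x ≠ 0 → (x ∈ carrier ↔ zeroFree x ∈ carrier)
  norm_le_K_mul : ∀ x : ℕ → X, zeroFree x ≠ 0 → x ∈ carrier → norm x ≤ K * norm (zeroFree x)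
  coord_norm_le : ∀ x ∈ carrier, ∀ j : ℕ, ‖x j‖ ≤ norm x

/-- A strongly invariant sequence space: an invariant sequence space containing `c₀₀(X)`
and such that a sequence belongs to the space iff all of its subsequences do. -/
structure StronglyInvariantSeqSpace (𝕂 : Type*) (X : Type*) [RCLike 𝕂]
    [NormedAddCommGroup X] [NormedSpace 𝕂 X] extends InvariantSeqSpace 𝕂 X where
  c00_subset : ∀ x : ℕ → X, {j | x j ≠ 0}.Finite → x ∈ carrier
  mem_iff_subseq : ∀ x : ℕ → X,
    x ∈ carrier ↔ ∀ n : ℕ → ℕ, StrictMono n → (fun k => x (n k)) ∈ carrier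

/-- A subset `A` of an invariant sequence space `E` is spaceable if `A ∪ {0}` contains a
closed (w.r.t. the norm of `E`) infinite-dimensional linear subspace of `E`. -/
def Spaceable {𝕂 X : Type*} [RCLike 𝕂] [NormedAddCommGroup X] [NormedSpace 𝕂 X]
    (E : InvariantSeqSpace 𝕂 X) (A : Set (ℕ → X)) : Prop :=
  ∃ V : Submodule 𝕂 (ℕ → X), V ≤ E.carrier ∧ ¬ Module.Finite 𝕂 V ∧
    (V : Set (ℕ → X)) ⊆ A ∪ {0} ∧
    ∀ u : ℕ → ℕ → X, (∀ n, u n ∈ V) → ∀ z ∈ E.carrier,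
      (∀ ε : ℝ, 0 < ε → ∃ N, ∀ n ≥ N, E.norm (u n - z) < ε) → z ∈ V

/-- `f : X → Y` with `f 0 = 0` is compatible with an invariant sequence space `F` over `Y`:
`(f(x_j))_j ∉ F` implies `(f(a x_j))_j ∉ F` for every scalar `a ≠ 0`. -/
def Compatible {𝕂 X Y : Type*} [RCLike 𝕂] [NormedAddCommGroup X] [NormedSpace 𝕂 X]
    [NormedAddCommGroup Y] [NormedSpace 𝕂 Y]
    (f : X → Y) (F : InvariantSeqSpace 𝕂 Y) : Prop :=
  f 0 = 0 ∧ ∀ (x : ℕ → X) (a : 𝕂), a ≠ 0 →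
    (fun j => f (x j)) ∉ F.carrier → (fun j => f (a • x j)) ∉ F.carrier


/-! ### Auxiliary lemmas -/

section Aux

open Nat Filter

lemma zeroFree_of_infinite {X : Type*} [Zero X] {x : ℕ → X}
    (h : {j | x j ≠ 0}.Infinite) :
    zeroFree x = fun k => x (Nat.nth (fun j => x j ≠ 0) k) := if_pos h

lemma zeroFree_apply_ne_zero {X : Type*} [Zero X] {x : ℕ → X}
    (h : {j | x j ≠ 0}.Infinite) (k : ℕ) : zeroFree x k ≠ 0 := by
  rw [zeroFree_of_infinite h]
  exact Nat.nth_mem_of_infinite h k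

lemma zeroFree_ne_zero {X : Type*} [Zero X] {x : ℕ → X}
    (h : {j | x j ≠ 0}.Infinite) : zeroFree x ≠ 0 := fun hc =>
  zeroFree_apply_ne_zero h 0 (congrFun hc 0)

/-- The `i`-th member of a partition of `ℕ` into infinitely many infinite sets. -/
def pI (i : ℕ) : ℕ → Prop := fun j => (Nat.unpair j).1 = i

lemma pI_infinite (i : ℕ) : (setOf (pI i)).Infinite := by
  refine Set.infinite_of_injective_forall_mem (f := fun k : ℕ => Nat.pair i k)
    (fun a b hab => by simpa using congrArg (fun n => (Nat.unpair n).2) hab)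
    (fun k => by show (Nat.unpair (Nat.pair i k)).1 = i; simp)

lemma pI_pair (i k : ℕ) : pI i (Nat.pair i k) := by simp [pI]

/-- The sequence supported on `{j | pI i j}` whose nonzero part is `g`. -/
noncomputable def Yseq {X : Type*} [Zero X] (g : ℕ → X) (i : ℕ) : ℕ → X :=
  fun j => if pI i j then g (Nat.count (pI i) j) else 0

variable {X : Type*} [Zero X] {g : ℕ → X} (hg : ∀ k, g k ≠ 0)

include hg

lemma Yseq_support (i : ℕ) : (fun j => Yseq g i j ≠ 0) = pI i := by
  funext j
  by_cases h : pI i j <;> simp [Yseq, h, hg]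

omit hg in
lemma Yseq_nth (i k : ℕ) : Yseq g i (Nat.nth (pI i) k) = g k := by
  have h1 : pI i (Nat.nth (pI i) k) := Nat.nth_mem_of_infinite (pI_infinite i) k
  simp [Yseq, h1, Nat.count_nth_of_infinite (pI_infinite i)]

lemma zeroFree_Yseq (i : ℕ) : zeroFree (Yseq g i) = g := by
  have hsup : {j | Yseq g i j ≠ 0} = setOf (pI i) := by
    ext j; exact iff_of_eq (congrFun (Yseq_support hg i) j)
  have hs : {j | Yseq g i j ≠ 0}.Infinite := by rw [hsup]; exact pI_infinite i
  rw [zeroFree_of_infinite hs]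
  funext k
  rw [show (fun j => Yseq g i j ≠ 0) = pI i from Yseq_support hg i]
  exact Yseq_nth i k

end Aux

section Aux2

open Nat Filter

variable {𝕂 X : Type*} [RCLike 𝕂] [NormedAddCommGroup X] [NormedSpace 𝕂 X]
  {g : ℕ → X} (hg : ∀ k, g k ≠ 0)

include hg

lemma Yseq_linearIndependent : LinearIndependent 𝕂 (Yseq g : ℕ → ℕ → X) := by
  rw [linearIndependent_iff']
  intro s c hsum i hi
  have h0 := congrFun hsum (Nat.pair i 0)
  have h1 : (∑ i' ∈ s, c i' • Yseq g i') (Nat.pair i 0)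
      = ∑ i' ∈ s, c i' • Yseq g i' (Nat.pair i 0) := by
    simp [Finset.sum_apply]
  rw [h1, Finset.sum_eq_single i] at h0
  · have h2 : Yseq g i (Nat.pair i 0) ≠ 0 := by
      simp only [Yseq, if_pos (pI_pair i 0)]; exact hg _
    rcases smul_eq_zero.mp h0 with h | h
    · exact h
    · exact absurd h h2
  · intro i' _ hii
    have : ¬ pI i' (Nat.pair i 0) := by simp [pI, hii.symm]
    simp [Yseq, this]
  · intro h; exact absurd hi h

omit hg in
lemma span_rep {w : ℕ → X} (hw : w ∈ Submodule.span 𝕂 (Set.range (Yseq g))) :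
    ∃ c : ℕ → 𝕂, ∀ j : ℕ,
      w j = c ((Nat.unpair j).1) • g (Nat.count (pI ((Nat.unpair j).1)) j) := by
  induction hw using Submodule.span_induction with
  | mem w hw =>
    obtain ⟨i, rfl⟩ := hw
    refine ⟨fun i' => if i' = i then 1 else 0, fun j => ?_⟩
    by_cases h : pI i j
    · have hi' : (Nat.unpair j).1 = i := h
      simp [Yseq, if_pos h, hi']
    · have : (Nat.unpair j).1 ≠ i := h
      simp [Yseq, h, this]
  | zero => exact ⟨0, fun j => by simp⟩
  | add w w' hw hw' ihw ihw' =>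
    obtain ⟨c, hc⟩ := ihw; obtain ⟨c', hc'⟩ := ihw'
    exact ⟨c + c', fun j => by simp [hc j, hc' j, add_smul]⟩
  | smul a w hw ihw =>
    obtain ⟨c, hc⟩ := ihw
    exact ⟨a • c, fun j => by simp [hc j, mul_smul]⟩

end Aux2

section Closure

variable {𝕂 X : Type*} [RCLike 𝕂] [NormedAddCommGroup X] [NormedSpace 𝕂 X]

/-- The sequential closure (w.r.t. `E.norm`) of a subspace `S ≤ E.carrier`, inside
`E.carrier`. -/
def closSub (E : InvariantSeqSpace 𝕂 X) (S : Submodule 𝕂 (ℕ → X))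
    (hSE : S ≤ E.carrier) : Submodule 𝕂 (ℕ → X) where
  carrier := {z | z ∈ E.carrier ∧ ∃ w : ℕ → ℕ → X, (∀ n, w n ∈ S) ∧
      ∀ ε : ℝ, 0 < ε → ∃ N, ∀ n ≥ N, E.norm (w n - z) < ε}
  zero_mem' := by
    refine ⟨E.carrier.zero_mem, fun _ => 0, fun n => S.zero_mem, fun ε hε => ⟨0, fun n _ => ?_⟩⟩
    rw [sub_self, (E.norm_eq_zero_iff 0 E.carrier.zero_mem).mpr rfl]
    exact hε
  add_mem' := by
    rintro z z' ⟨hzE, w, hwS, hw⟩ ⟨hzE', w', hwS', hw'⟩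
    refine ⟨E.carrier.add_mem hzE hzE', fun n => w n + w' n, fun n => S.add_mem (hwS n) (hwS' n),
      fun ε hε => ?_⟩
    obtain ⟨N, hN⟩ := hw (ε / 2) (by positivity)
    obtain ⟨N', hN'⟩ := hw' (ε / 2) (by positivity)
    refine ⟨max N N', fun n hn => ?_⟩
    have h1 : w n + w' n - (z + z') = (w n - z) + (w' n - z') := by abel
    have hm1 : w n - z ∈ E.carrier := sub_mem (hSE (hwS n)) hzE
    have hm2 : w' n - z' ∈ E.carrier := sub_mem (hSE (hwS' n)) hzE'
    have htri := E.norm_add_le _ hm1 _ hm2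
    have hb1 := hN n (le_trans (le_max_left _ _) hn)
    have hb2 := hN' n (le_trans (le_max_right _ _) hn)
    rw [h1]
    linarith
  smul_mem' := by
    rintro a z ⟨hzE, w, hwS, hw⟩
    refine ⟨E.carrier.smul_mem a hzE, fun n => a • w n, fun n => S.smul_mem a (hwS n),
      fun ε hε => ?_⟩
    obtain ⟨N, hN⟩ := hw (ε / (‖a‖ + 1)) (by positivity)
    refine ⟨N, fun n hn => ?_⟩
    have hm : w n - z ∈ E.carrier := sub_mem (hSE (hwS n)) hzE
    have h1 : a • w n - a • z = a • (w n - z) := (smul_sub a _ _).symm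
    rw [h1, E.norm_smul a _ hm]
    have hnn : 0 ≤ E.norm (w n - z) := E.norm_nonneg _ hm
    have hb := hN n hn
    have h2 : ‖a‖ * E.norm (w n - z) ≤ (‖a‖ + 1) * E.norm (w n - z) := by nlinarith
    have h3 : (‖a‖ + 1) * E.norm (w n - z) < ε := (lt_div_iff₀' (by positivity)).mp hb
    linarith
  
lemma mem_closSub {E : InvariantSeqSpace 𝕂 X} {S : Submodule 𝕂 (ℕ → X)}
    {hSE : S ≤ E.carrier} {z : ℕ → X} :
    z ∈ closSub E S hSE ↔ z ∈ E.carrier ∧ ∃ w : ℕ → ℕ → X, (∀ n, w n ∈ S) ∧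
      ∀ ε : ℝ, 0 < ε → ∃ N, ∀ n ≥ N, E.norm (w n - z) < ε := Iff.rfl

lemma closSub_closed (E : InvariantSeqSpace 𝕂 X) (S : Submodule 𝕂 (ℕ → X))
    (hSE : S ≤ E.carrier) :
    ∀ u : ℕ → ℕ → X, (∀ n, u n ∈ closSub E S hSE) → ∀ z ∈ E.carrier,
      (∀ ε : ℝ, 0 < ε → ∃ N, ∀ n ≥ N, E.norm (u n - z) < ε) → z ∈ closSub E S hSE := by
  intro u hu z hzE hconv
  refine mem_closSub.mpr ⟨hzE, ?_⟩
  have hv : ∀ n : ℕ, ∃ v ∈ S, E.norm (v - u n) < 1 / (n + 1) := by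
    intro n
    obtain ⟨_, w, hwS, hw⟩ := hu n
    obtain ⟨N, hN⟩ := hw (1 / (n + 1)) (by positivity)
    exact ⟨w N, hwS N, hN N le_rfl⟩
  choose v hvS hv using hv
  refine ⟨v, hvS, fun ε hε => ?_⟩
  obtain ⟨N1, hN1⟩ := hconv (ε / 2) (by positivity)
  obtain ⟨N2, hN2⟩ := exists_nat_one_div_lt (show (0:ℝ) < ε / 2 by positivity)
  refine ⟨max N1 N2, fun n hn => ?_⟩
  have hn1 : N1 ≤ n := le_trans (le_max_left _ _) hn
  have hn2 : N2 ≤ n := le_trans (le_max_right _ _) hn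
  have hm1 : v n - u n ∈ E.carrier := sub_mem (hSE (hvS n)) (hu n).1
  have hm2 : u n - z ∈ E.carrier := sub_mem (hu n).1 hzE
  have htri : E.norm (v n - z) ≤ E.norm (v n - u n) + E.norm (u n - z) := by
    have h := E.norm_add_le _ hm1 _ hm2
    rwa [sub_add_sub_cancel] at h
  have hb1 : E.norm (v n - u n) < 1 / (n + 1) := hv n
  have hb2 : (1 : ℝ) / (n + 1) ≤ 1 / (N2 + 1) := by
    apply one_div_le_one_div_of_le (by positivity)
    exact_mod_cast Nat.succ_le_succ hn2
  have hb3 := hN1 n hn1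
  linarith

end Closure

open Filter Topology in
/-- **Theorem 2.7 (main theorem).**  If `E` is an invariant sequence space over `X`,
`(E_l)_{l ∈ Γ}` are strongly invariant sequence spaces over `Y` and `f : X → Y` is
compatible with every `E_l`, then
`G(E, f, (E_l)) = {(x_j) ∈ E : (f(x_j)) ∉ ⋃_l E_l}` is either empty or spaceable in `E`. -/
theorem spaceability_of_G {𝕂 X Y : Type*} [RCLike 𝕂]
    [NormedAddCommGroup X] [NormedSpace 𝕂 X] [CompleteSpace X]
    [NormedAddCommGroup Y] [NormedSpace 𝕂 Y] [CompleteSpace Y]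
    {Γ : Type*} [Nonempty Γ]
    (E : InvariantSeqSpace 𝕂 X) (El : Γ → StronglyInvariantSeqSpace 𝕂 Y)
    (f : X → Y) (hf : ∀ l : Γ, Compatible f (El l).toInvariantSeqSpace) :
    {x : ℕ → X | x ∈ E.carrier ∧ ∀ l : Γ, (fun j => f (x j)) ∉ (El l).carrier} = ∅ ∨
      Spaceable E
        {x : ℕ → X | x ∈ E.carrier ∧ ∀ l : Γ, (fun j => f (x j)) ∉ (El l).carrier} := by
  by_cases hG : {x : ℕ → X | x ∈ E.carrier ∧ ∀ l : Γ,
      (fun j => f (x j)) ∉ (El l).carrier} = ∅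
  · exact Or.inl hG
  right
  obtain ⟨x, hxE, hxf⟩ : ∃ x : ℕ → X, x ∈ E.carrier ∧
      ∀ l : Γ, (fun j => f (x j)) ∉ (El l).carrier := by
    rcases Set.nonempty_iff_ne_empty.mpr hG with ⟨x, hx⟩
    exact ⟨x, hx.1, hx.2⟩
  obtain ⟨l₀⟩ := ‹Nonempty Γ›
  have hf0 : f 0 = 0 := (hf l₀).1
  -- the mother vector has infinitely many nonzero coordinates
  have hxinf : {j | x j ≠ 0}.Infinite := by
    by_contra h
    have hfin : {j | f (x j) ≠ 0}.Finite := by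
      refine (Set.not_infinite.mp h).subset fun j hj hxj => ?_
      exact hj (by rw [hxj, hf0])
    exact hxf l₀ ((El l₀).c00_subset _ hfin)
  set g : ℕ → X := zeroFree x with hgdef
  have hg : ∀ k, g k ≠ 0 := zeroFree_apply_ne_zero hxinf
  have hgne : g ≠ 0 := zeroFree_ne_zero hxinf
  have hgE : g ∈ E.carrier := (E.mem_iff_zeroFree_mem x hgne).mp hxE
  have hYE : ∀ i, Yseq g i ∈ E.carrier := by
    intro i
    have hzf : zeroFree (Yseq g i) = g := zeroFree_Yseq hg i
    have hne : zeroFree (Yseq g i) ≠ 0 := by rw [hzf]; exact hgne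
    exact (E.mem_iff_zeroFree_mem (Yseq g i) hne).mpr (by rw [hzf]; exact hgE)
  have hSE : Submodule.span 𝕂 (Set.range (Yseq g)) ≤ E.carrier :=
    Submodule.span_le.mpr (by rintro _ ⟨i, rfl⟩; exact hYE i)
  -- the key non-membership fact for the zero-free mother vector
  have hgnot : ∀ l : Γ, (fun k => f (g k)) ∉ (El l).carrier := by
    intro l hgl
    by_cases hQ : {j | f (x j) ≠ 0}.Infinite
    · have hPQ : ∀ t, x (Nat.nth (fun j => f (x j) ≠ 0) t) ≠ 0 := by
        intro t hx0
        have h1 : f (x (Nat.nth (fun j => f (x j) ≠ 0) t)) ≠ 0 :=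
          Nat.nth_mem_of_infinite hQ t
        exact h1 (by rw [hx0, hf0])
      have hsm : StrictMono (fun t =>
          Nat.count (fun j => x j ≠ 0) (Nat.nth (fun j => f (x j) ≠ 0) t)) := by
        intro t t' htt
        have h1 : Nat.nth (fun j => f (x j) ≠ 0) t < Nat.nth (fun j => f (x j) ≠ 0) t' :=
          (Nat.nth_lt_nth hQ).mpr htt
        calc Nat.count (fun j => x j ≠ 0) (Nat.nth (fun j => f (x j) ≠ 0) t)
            < Nat.count (fun j => x j ≠ 0) (Nat.nth (fun j => f (x j) ≠ 0) t + 1) :=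
              Nat.count_lt_count_succ_iff.mpr (hPQ t)
          _ ≤ Nat.count (fun j => x j ≠ 0) (Nat.nth (fun j => f (x j) ≠ 0) t') :=
              Nat.count_monotone _ (Nat.succ_le_of_lt h1)
      have hgs : ∀ t, g (Nat.count (fun j => x j ≠ 0) (Nat.nth (fun j => f (x j) ≠ 0) t))
          = x (Nat.nth (fun j => f (x j) ≠ 0) t) := by
        intro t
        rw [hgdef, zeroFree_of_infinite hxinf]
        exact congrArg x (Nat.nth_count (hPQ t))
      have hsub : (fun t => f (g (Nat.count (fun j => x j ≠ 0)
          (Nat.nth (fun j => f (x j) ≠ 0) t)))) ∈ (El l).carrier :=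
        ((El l).mem_iff_subseq _).mp hgl _ hsm
      have hzf : zeroFree (fun j => f (x j)) = fun t => f (g (Nat.count (fun j => x j ≠ 0)
          (Nat.nth (fun j => f (x j) ≠ 0) t))) := by
        rw [zeroFree_of_infinite hQ]
        funext t
        rw [hgs t]
      have hzfne : zeroFree (fun j => f (x j)) ≠ 0 := zeroFree_ne_zero hQ
      exact hxf l (((El l).mem_iff_zeroFree_mem _ hzfne).mpr (by rw [hzf]; exact hsub))
    · exact hxf l ((El l).c00_subset _ (Set.not_infinite.mp hQ))
  refine ⟨closSub E (Submodule.span 𝕂 (Set.range (Yseq g))) hSE,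
    fun z hz => (mem_closSub.mp hz).1, ?_, ?_, closSub_closed E _ hSE⟩
  · -- infinite dimensionality
    have hYV : ∀ i, Yseq g i ∈ closSub E (Submodule.span 𝕂 (Set.range (Yseq g))) hSE := by
      intro i
      refine mem_closSub.mpr ⟨hYE i, fun _ => Yseq g i,
        fun n => Submodule.subset_span ⟨i, rfl⟩, fun ε hε => ⟨0, fun n _ => ?_⟩⟩
      rw [sub_self, (E.norm_eq_zero_iff 0 E.carrier.zero_mem).mpr rfl]
      exact hε
    intro hfin
    have hli : LinearIndependent 𝕂 (fun i =>
        (⟨Yseq g i, hYV i⟩ : closSub E (Submodule.span 𝕂 (Set.range (Yseq g))) hSE)) := by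
      apply LinearIndependent.of_comp
        (closSub E (Submodule.span 𝕂 (Set.range (Yseq g))) hSE).subtype
      exact Yseq_linearIndependent hg
    exact Module.Finite.not_linearIndependent_of_infinite _ hli
  · -- containment in G ∪ {0}
    intro z hz
    by_cases hz0 : z = 0
    · exact Or.inr (by simp [hz0])
    left
    obtain ⟨hzE, w, hwS, hwz⟩ := mem_closSub.mp hz
    choose c hc using fun n => span_rep (𝕂 := 𝕂) (hwS n)
    have hcoord : ∀ j, Tendsto (fun n => w n j) atTop (𝓝 (z j)) := by
      intro j
      rw [Metric.tendsto_atTop]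
      intro ε hε
      obtain ⟨N, hN⟩ := hwz ε hε
      refine ⟨N, fun n hn => ?_⟩
      rw [dist_eq_norm]
      calc ‖w n j - z j‖ = ‖(w n - z) j‖ := rfl
        _ ≤ E.norm (w n - z) := E.coord_norm_le _ (sub_mem (hSE (hwS n)) hzE) j
        _ < ε := hN n hn
    have hcau : ∀ i, ∃ a : 𝕂, Tendsto (fun n => c n i) atTop (𝓝 a) := by
      intro i
      have hj0 : (Nat.unpair (Nat.pair i 0)).1 = i := by simp
      have hv0 : g (Nat.count (pI i) (Nat.pair i 0)) ≠ 0 := hg _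
      have ht : Tendsto (fun n => c n i • g (Nat.count (pI i) (Nat.pair i 0))) atTop
          (𝓝 (z (Nat.pair i 0))) := by
        refine (hcoord (Nat.pair i 0)).congr fun n => ?_
        rw [hc n (Nat.pair i 0), hj0]
      apply cauchySeq_tendsto_of_complete
      rw [Metric.cauchySeq_iff]
      intro ε hε
      have hc2 := ht.cauchySeq
      rw [Metric.cauchySeq_iff] at hc2
      obtain ⟨N, hN⟩ := hc2 (ε * ‖g (Nat.count (pI i) (Nat.pair i 0))‖)
        (mul_pos hε (norm_pos_iff.mpr hv0))
      refine ⟨N, fun m hm n hn => ?_⟩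
      have hd := hN m hm n hn
      rw [dist_eq_norm, ← sub_smul, norm_smul] at hd
      rw [dist_eq_norm]
      exact lt_of_mul_lt_mul_right hd (norm_nonneg _)
    choose a ha using hcau
    have hzstr : ∀ j, z j = a ((Nat.unpair j).1) •
        g (Nat.count (pI ((Nat.unpair j).1)) j) := by
      intro j
      refine tendsto_nhds_unique (hcoord j) ?_
      refine Tendsto.congr (fun n => (hc n j).symm) ?_
      exact (ha ((Nat.unpair j).1)).smul_const _
    obtain ⟨j1, hj1⟩ : ∃ j, z j ≠ 0 := by
      by_contra h; push_neg at h; exact hz0 (funext h)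
    have hai : a ((Nat.unpair j1).1) ≠ 0 := by
      intro h0
      exact hj1 (by rw [hzstr j1, h0, zero_smul])
    refine ⟨hzE, fun l hmem => ?_⟩
    have hsm : StrictMono (Nat.nth (pI ((Nat.unpair j1).1))) :=
      Nat.nth_strictMono (pI_infinite _)
    have h1 : (fun k => f (z (Nat.nth (pI ((Nat.unpair j1).1)) k))) ∈ (El l).carrier :=
      ((El l).mem_iff_subseq _).mp hmem _ hsm
    have h2 : (fun k => f (z (Nat.nth (pI ((Nat.unpair j1).1)) k)))
        = fun k => f (a ((Nat.unpair j1).1) • g k) := by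
      funext k
      have hp : pI ((Nat.unpair j1).1) (Nat.nth (pI ((Nat.unpair j1).1)) k) :=
        Nat.nth_mem_of_infinite (pI_infinite _) k
      have hzs := hzstr (Nat.nth (pI ((Nat.unpair j1).1)) k)
      rw [show (Nat.unpair (Nat.nth (pI ((Nat.unpair j1).1)) k)).1 = (Nat.unpair j1).1
        from hp] at hzs
      rw [Nat.count_nth_of_infinite (pI_infinite _) k] at hzs
      rw [hzs]
    rw [h2] at h1
    exact (hf l).2 g (a ((Nat.unpair j1).1)) hai (hgnot l) h1
end

section
/- Let X and Y be Banach spaces over 𝕂 (= ℝ or ℂ), let E be an invariant sequence space over X, let Γ ⊆ (0, ∞] and let f : X → Y be non-contractive. Then the set C(E, f, Γ) = { (x_j)_{j=1}^∞ ∈ E : (f(x_j))_{j=1}^∞ ∉ ⋃_{q∈Γ} ℓ_q(Y) } is either empty or spaceable in E. -/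
open scoped Classical

/-- `f : X → Y` is non-contractive: `f 0 = 0` and for every scalar `α ≠ 0` there is
`K(α) > 0` with `‖f(αx)‖ ≥ K(α)‖f(x)‖` for all `x`. -/
def NonContractive {𝕂 X Y : Type*} [RCLike 𝕂] [NormedAddCommGroup X] [NormedSpace 𝕂 X]
    [NormedAddCommGroup Y] [NormedSpace 𝕂 Y] (f : X → Y) : Prop :=
  f 0 = 0 ∧ ∀ a : 𝕂, a ≠ 0 → ∃ K : ℝ, 0 < K ∧ ∀ x : X, K * ‖f x‖ ≤ ‖f (a • x)‖

/-- Membership in `ℓ_q(Y)` for `0 < q ≤ ∞`: for `q < ∞`, `Σ ‖y_j‖^q < ∞`; for `q = ∞`,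
boundedness. -/
def MemLq {Y : Type*} [NormedAddCommGroup Y] (q : ENNReal) (y : ℕ → Y) : Prop :=
  if q = ⊤ then ∃ C : ℝ, ∀ j, ‖y j‖ ≤ C
  else Summable fun j => ‖y j‖ ^ q.toReal


section Aux

variable {Y : Type*} [NormedAddCommGroup Y]

theorem memLq_of_finite_support {q : ENNReal} (hq : 0 < q) {y : ℕ → Y}
    (h : {j | y j ≠ 0}.Finite) : MemLq q y := by
  by_cases hT : q = ⊤
  · rw [MemLq, if_pos hT]
    refine ⟨h.toFinset.sum fun j => ‖y j‖, fun j => ?_⟩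
    by_cases hj : y j = 0
    · rw [hj, norm_zero]
      exact Finset.sum_nonneg fun _ _ => norm_nonneg _
    · exact Finset.single_le_sum (f := fun j => ‖y j‖) (fun _ _ => norm_nonneg _)
        (h.mem_toFinset.2 hj)
  · rw [MemLq, if_neg hT]
    have ht : 0 < q.toReal := ENNReal.toReal_pos hq.ne' hT
    refine summable_of_finite_support (h.subset ?_)
    intro j hj
    simp only [Function.mem_support, Set.mem_setOf_eq] at hj ⊢
    intro h0
    exact hj (by rw [h0, norm_zero, Real.zero_rpow ht.ne'])

theorem memLq_of_comp {q : ENNReal} (hq : 0 < q) {y : ℕ → Y} {i : ℕ → ℕ}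
    (hi : Function.Injective i) (h0 : ∀ j ∉ Set.range i, y j = 0)
    (h : MemLq q fun k => y (i k)) : MemLq q y := by
  by_cases hT : q = ⊤
  · rw [MemLq, if_pos hT] at h ⊢
    obtain ⟨C, hC⟩ := h
    refine ⟨max C 0, fun j => ?_⟩
    by_cases hj : j ∈ Set.range i
    · obtain ⟨k, rfl⟩ := hj
      exact le_max_of_le_left (hC k)
    · rw [h0 j hj, norm_zero]
      exact le_max_right _ _
  · rw [MemLq, if_neg hT] at h ⊢
    have ht : 0 < q.toReal := ENNReal.toReal_pos hq.ne' hT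
    refine (Function.Injective.summable_iff hi fun j hj => ?_).1 h
    rw [h0 j hj, norm_zero, Real.zero_rpow ht.ne']

theorem memLq_of_dominates {Y' : Type*} [NormedAddCommGroup Y'] {q : ENNReal} (hq : 0 < q)
    {y : ℕ → Y} {w : ℕ → Y'} {i : ℕ → ℕ} (hi : Function.Injective i) {c : ℝ} (hc : 0 < c)
    (hle : ∀ k, c * ‖w k‖ ≤ ‖y (i k)‖) (h : MemLq q y) : MemLq q w := by
  have key : ∀ k, ‖w k‖ ≤ c⁻¹ * ‖y (i k)‖ := by
    intro k
    rw [le_inv_mul_iff₀ hc]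
    exact hle k
  by_cases hT : q = ⊤
  · rw [MemLq, if_pos hT] at h ⊢
    obtain ⟨C, hC⟩ := h
    exact ⟨c⁻¹ * C, fun k => (key k).trans
      (mul_le_mul_of_nonneg_left (hC (i k)) (inv_nonneg.2 hc.le))⟩
  · rw [MemLq, if_neg hT] at h ⊢
    have ht : 0 < q.toReal := ENNReal.toReal_pos hq.ne' hT
    have hsi : Summable fun k => ‖y (i k)‖ ^ q.toReal := h.comp_injective hi
    refine Summable.of_nonneg_of_le (fun k => Real.rpow_nonneg (norm_nonneg _) _)
      (fun k => ?_) (hsi.mul_left (c⁻¹ ^ q.toReal))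
    calc ‖w k‖ ^ q.toReal ≤ (c⁻¹ * ‖y (i k)‖) ^ q.toReal :=
          Real.rpow_le_rpow (norm_nonneg _) (key k) ht.le
      _ = c⁻¹ ^ q.toReal * ‖y (i k)‖ ^ q.toReal :=
          Real.mul_rpow (inv_nonneg.2 hc.le) (norm_nonneg _)

end Aux

/-- **Theorem 1.4(a), first part (Botelho–Fávaro).**  If `f` is non-contractive and
`Γ ⊆ (0, ∞]`, then `C(E, f, Γ) = {(x_j) ∈ E : (f(x_j)) ∉ ⋃_{q ∈ Γ} ℓ_q(Y)}` is either
empty or spaceable in `E`. -/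
theorem spaceability_of_C {𝕂 X Y : Type*} [RCLike 𝕂]
    [NormedAddCommGroup X] [NormedSpace 𝕂 X] [CompleteSpace X]
    [NormedAddCommGroup Y] [NormedSpace 𝕂 Y] [CompleteSpace Y]
    (E : InvariantSeqSpace 𝕂 X) (Γ : Set ENNReal) (hΓ : ∀ q ∈ Γ, 0 < q)
    (f : X → Y) (hf : NonContractive (𝕂 := 𝕂) f) :
    {x : ℕ → X | x ∈ E.carrier ∧ ∀ q ∈ Γ, ¬ MemLq q fun j => f (x j)} = ∅ ∨
      Spaceable E {x : ℕ → X | x ∈ E.carrier ∧ ∀ q ∈ Γ, ¬ MemLq q fun j => f (x j)} := by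
    classical
  by_cases hGe : Γ = ∅
  · -- trivial case: Γ empty, take V = E.carrier
    right
    refine ⟨E.carrier, le_rfl, E.infiniteDimensional, ?_, ?_⟩
    · intro z hz
      exact Or.inl ⟨hz, fun q hq => absurd (hGe ▸ hq) (Set.notMem_empty q)⟩
    · intro u _ z hz _
      exact hz
  by_cases hC : {x : ℕ → X | x ∈ E.carrier ∧ ∀ q ∈ Γ, ¬ MemLq q fun j => f (x j)} = ∅
  · exact Or.inl hC
  right
  obtain ⟨x, hxE, hxq⟩ := Set.nonempty_iff_ne_empty.2 hC
  obtain ⟨q0, hq0⟩ := Set.nonempty_iff_ne_empty.2 hGe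
  set p : ℕ → Prop := fun j => x j ≠ 0 with hp
  have hSinf : (setOf p).Infinite := by
    by_contra hfin
    rw [Set.not_infinite] at hfin
    refine hxq q0 hq0 (memLq_of_finite_support (hΓ q0 hq0) (hfin.subset ?_))
    intro j hj
    simp only [Set.mem_setOf_eq] at hj ⊢
    intro h0
    exact hj (by rw [h0, hf.1])
  have hx0def : zeroFree x = fun k => x (Nat.nth p k) := if_pos hSinf
  set x0 : ℕ → X := fun k => x (Nat.nth p k) with hx0s
  have hzf : zeroFree x = x0 := hx0def
  have hx0 : ∀ k, x0 k ≠ 0 := fun k => Nat.nth_mem_of_infinite hSinf k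
  have hx0ne : zeroFree x ≠ 0 := by
    rw [hzf]
    exact fun h => hx0 0 (congrFun h 0)
  have hx0E : x0 ∈ E.carrier := by
    have := (E.mem_iff_zeroFree_mem x hx0ne).1 hxE
    rwa [hzf] at this
  have hx0q : ∀ q ∈ Γ, ¬ MemLq q fun k => f (x0 k) := by
    intro q hq hmem
    refine hxq q hq (memLq_of_comp (hΓ q hq) (Nat.nth_injective hSinf) ?_ ?_)
    · intro j hj
      rw [Nat.range_nth_of_infinite hSinf] at hj
      simp only [Set.mem_setOf_eq, hp, not_not] at hj
      rw [hj, hf.1]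
    · exact hmem
  -- the building blocks
  set xi : ℕ → ℕ → X := fun i j => if (Nat.unpair j).1 = i then x0 (Nat.unpair j).2 else 0
    with hxis
  have hpair_inj : ∀ i : ℕ, Function.Injective fun k => Nat.pair i k := by
    intro i a b h
    have := congrArg (fun n => (Nat.unpair n).2) h
    simpa [Nat.unpair_pair] using this
  have hxi_pair : ∀ i k, xi i (Nat.pair i k) = x0 k := by
    intro i k; simp [hxis, Nat.unpair_pair]
  have hxi_pair' : ∀ i i' k, i' ≠ i → xi i (Nat.pair i' k) = 0 := by
    intro i i' k hne; simp [hxis, Nat.unpair_pair, hne]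
  have hxiset : ∀ i, {j | xi i j ≠ 0} = Set.range fun k => Nat.pair i k := by
    intro i
    ext j
    simp only [Set.mem_setOf_eq, Set.mem_range, hxis]
    constructor
    · intro hj
      by_cases h1 : (Nat.unpair j).1 = i
      · exact ⟨(Nat.unpair j).2, by rw [← h1, Nat.pair_unpair]⟩
      · exact absurd (if_neg h1) hj
    · rintro ⟨k, rfl⟩
      rw [Nat.unpair_pair]
      simpa using hx0 k
  have hxiinf : ∀ i, {j | xi i j ≠ 0}.Infinite := by
    intro i
    rw [hxiset i]
    exact Set.infinite_range_of_injective (hpair_inj i)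
  have hnth : ∀ i, Nat.nth (fun j => xi i j ≠ 0) = fun k => Nat.pair i k := by
    intro i
    refine ((Nat.nth_strictMono (hxiinf i)).range_inj
      (fun a b h => Nat.pair_lt_pair_right i h)).1 ?_
    rw [Nat.range_nth_of_infinite (hxiinf i)]
    exact hxiset i
  have hzfxi : ∀ i, zeroFree (xi i) = x0 := by
    intro i
    rw [zeroFree, if_pos (hxiinf i), hnth i]
    funext k
    exact hxi_pair i k
  have hzfxine : ∀ i, zeroFree (xi i) ≠ 0 := by
    intro i h
    rw [hzfxi i] at h
    exact hx0 0 (congrFun h 0)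
  have hxiE : ∀ i, xi i ∈ E.carrier := by
    intro i
    refine (E.mem_iff_zeroFree_mem (xi i) (hzfxine i)).2 ?_
    rw [hzfxi i]
    exact hx0E
  -- the submodule Z of "diagonally placed" sequences
  set Z : Submodule 𝕂 (ℕ → X) :=
    { carrier := {z | ∀ i, ∃ a : 𝕂, ∀ k, z (Nat.pair i k) = a • x0 k}
      add_mem' := by
        intro z w hz hw i
        obtain ⟨a, ha⟩ := hz i
        obtain ⟨b, hb⟩ := hw i
        exact ⟨a + b, fun k => by simp [ha k, hb k, add_smul]⟩
      zero_mem' := fun i => ⟨0, fun k => by simp⟩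
      smul_mem' := by
        intro c z hz i
        obtain ⟨a, ha⟩ := hz i
        exact ⟨c * a, fun k => by simp [ha k, smul_smul]⟩ } with hZs
  have hZmem : ∀ z, z ∈ Z ↔ ∀ i, ∃ a : 𝕂, ∀ k, z (Nat.pair i k) = a • x0 k := fun z => Iff.rfl
  set V : Submodule 𝕂 (ℕ → X) := E.carrier ⊓ Z with hVs
  have hxiV : ∀ i, xi i ∈ V := by
    intro i
    refine ⟨hxiE i, ?_⟩
    intro i'
    by_cases h : i' = i
    · refine ⟨1, fun k => ?_⟩
      rw [h, hxi_pair i k, one_smul]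
    · exact ⟨0, fun k => by rw [hxi_pair' i i' k h, zero_smul]⟩
  refine ⟨V, inf_le_left, ?_, ?_, ?_⟩
  · -- infinite-dimensionality
    intro hfin
    have hli : LinearIndependent 𝕂 fun i : ℕ => (⟨xi i, hxiV i⟩ : V) := by
      rw [linearIndependent_iff']
      intro s g hsum i hi
      have hval : (∑ i' ∈ s, g i' • xi i') = 0 := by
        have := congrArg (V.subtype) hsum
        simpa using this
      have heval := congrFun hval (Nat.pair i 0)
      rw [Finset.sum_apply] at heval
      simp only [Pi.smul_apply, Pi.zero_apply] at heval
      rw [Finset.sum_eq_single i (fun i' _ hne => by rw [hxi_pair' i' i 0 hne.symm, smul_zero])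
        (fun h => absurd hi h)] at heval
      rw [hxi_pair i 0] at heval
      exact (smul_eq_zero.1 heval).resolve_right (hx0 0)
    haveI : IsNoetherian 𝕂 V := isNoetherian_of_isNoetherianRing_of_finite 𝕂 V
    haveI : Finite ℕ := hli.finite_of_isNoetherian
    exact not_finite ℕ
  · -- V ⊆ A ∪ {0}
    intro z hz
    by_cases hz0 : z = 0
    · exact Or.inr hz0
    refine Or.inl ⟨hz.1, fun q hq hmem => ?_⟩
    obtain ⟨j, hj⟩ := Function.ne_iff.1 hz0
    set i := (Nat.unpair j).1
    obtain ⟨a, ha⟩ := hz.2 i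
    have hjz : z (Nat.pair i (Nat.unpair j).2) = a • x0 (Nat.unpair j).2 := ha _
    rw [Nat.pair_unpair] at hjz
    have hane : a ≠ 0 := by
      intro h0
      rw [h0, zero_smul] at hjz
      exact hj hjz
    obtain ⟨c, hc, hcf⟩ := hf.2 a hane
    refine hx0q q hq (memLq_of_dominates (hΓ q hq) (hpair_inj i) hc (fun k => ?_) hmem)
    rw [ha k]
    exact hcf (x0 k)
  · -- closedness
    intro u hu z hzE hconv
    refine ⟨hzE, ?_⟩
    intro i
    have ha' : ∀ n, ∃ a : 𝕂, ∀ k, u n (Nat.pair i k) = a • x0 k := fun n => (hu n).2 i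
    choose a ha using ha'
    have hcoord : ∀ j, Filter.Tendsto (fun n => u n j) Filter.atTop (nhds (z j)) := by
      intro j
      rw [Metric.tendsto_atTop]
      intro ε hε
      obtain ⟨N, hN⟩ := hconv ε hε
      refine ⟨N, fun n hn => ?_⟩
      rw [dist_eq_norm]
      calc ‖u n j - z j‖ = ‖(u n - z) j‖ := rfl
        _ ≤ E.norm (u n - z) := E.coord_norm_le (u n - z) (Submodule.sub_mem _ (hu n).1 hzE) j
        _ < ε := hN n hn
    have hv0 : (0 : ℝ) < ‖x0 0‖ := norm_pos_iff.2 (hx0 0)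
    have hc0 : CauchySeq fun n => a n • x0 0 := by
      have : (fun n => a n • x0 0) = fun n => u n (Nat.pair i 0) := by
        funext n; rw [ha n 0]
      rw [this]
      exact (hcoord (Nat.pair i 0)).cauchySeq
    have hca : CauchySeq a := by
      rw [Metric.cauchySeq_iff] at hc0 ⊢
      intro ε hε
      obtain ⟨N, hN⟩ := hc0 (ε * ‖x0 0‖) (by positivity)
      refine ⟨N, fun m hm n hn => ?_⟩
      have h1 := hN m hm n hn
      rw [dist_eq_norm, ← sub_smul, norm_smul] at h1
      rw [dist_eq_norm]
      exact lt_of_mul_lt_mul_right (by exact h1) hv0.le |>.trans_le le_rfl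
    obtain ⟨b, hb⟩ := cauchySeq_tendsto_of_complete hca
    refine ⟨b, fun k => ?_⟩
    have h1 : Filter.Tendsto (fun n => a n • x0 k) Filter.atTop (nhds (b • x0 k)) :=
      hb.smul_const (x0 k)
    have h2 : Filter.Tendsto (fun n => a n • x0 k) Filter.atTop (nhds (z (Nat.pair i k))) := by
      have : (fun n => a n • x0 k) = fun n => u n (Nat.pair i k) := by
        funext n; rw [ha n k]
      rw [this]
      exact hcoord (Nat.pair i k)
    exact tendsto_nhds_unique h2 h1
end

section
/- Let X and Y be Banach spaces over 𝕂 (= ℝ or ℂ), let E be an invariant sequence space over X, and let f : X → Y be non-contractive. Then the set C(E, f, 0) = { (x_j)_{j=1}^∞ ∈ E : (f(x_j))_{j=1}^∞ ∉ c₀(Y) } is either empty or spaceable in E. -/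
open scoped Classical

/-- The `i`-th "strip" sequence: places `v` along the pairs `(i, k)`. -/
noncomputable def BFy {X : Type*} [Zero X] (v : ℕ → X) (i : ℕ) : ℕ → X :=
  fun j => if (Nat.unpair j).1 = i then v (Nat.unpair j).2 else 0

lemma BFy_pair {X : Type*} [Zero X] (v : ℕ → X) (i i' k : ℕ) :
    BFy v i (Nat.pair i' k) = if i' = i then v k else 0 := by
  simp [BFy, Nat.unpair_pair]

lemma nth_strip (i : ℕ) :
    Nat.nth (fun j => (Nat.unpair j).1 = i) = fun k => Nat.pair i k := by
  have hsm : StrictMono (fun k => Nat.pair i k) :=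
    fun a b h => Nat.pair_lt_pair_right i h
  have hr : Set.range (fun k => Nat.pair i k) = {j | (Nat.unpair j).1 = i} := by
    ext j
    constructor
    · rintro ⟨k, rfl⟩; simp [Nat.unpair_pair]
    · intro h
      exact ⟨(Nat.unpair j).2, by simp only []; rw [← h, Nat.pair_unpair]⟩
  have hinf : {j | (Nat.unpair j).1 = i}.Infinite :=
    hr ▸ Set.infinite_range_of_injective hsm.injective
  exact (StrictMono.range_inj (Nat.nth_strictMono hinf) hsm).mp
    ((Nat.range_nth_of_infinite hinf).trans hr.symm)

lemma zeroFree_BFy {X : Type*} [Zero X] {v : ℕ → X} (hv : ∀ k, v k ≠ 0) (i : ℕ) :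
    zeroFree (BFy v i) = v := by
  have hpred : (fun j => BFy v i j ≠ 0) = fun j => (Nat.unpair j).1 = i := by
    funext j
    by_cases h : (Nat.unpair j).1 = i <;> simp [BFy, h, hv _]
  have hinf : {j | (Nat.unpair j).1 = i}.Infinite := by
    have hsm : StrictMono (fun k => Nat.pair i k) :=
      fun a b h => Nat.pair_lt_pair_right i h
    have hr : Set.range (fun k => Nat.pair i k) ⊆ {j | (Nat.unpair j).1 = i} := by
      rintro j ⟨k, rfl⟩; simp [Nat.unpair_pair]
    exact Set.Infinite.mono hr (Set.infinite_range_of_injective hsm.injective)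
  unfold zeroFree
  rw [show {j | BFy v i j ≠ 0} = {j | (Nat.unpair j).1 = i} from congrArg setOf hpred,
    if_pos hinf, hpred, nth_strip]
  funext k
  simpa using BFy_pair v i i k


namespace InvariantSeqSpace

variable {𝕂 X : Type*} [RCLike 𝕂] [NormedAddCommGroup X] [NormedSpace 𝕂 X]
  (E : InvariantSeqSpace 𝕂 X)

lemma norm_zero' : E.norm 0 = 0 := (E.norm_eq_zero_iff 0 (zero_mem _)).mpr rfl

lemma norm_nonneg' {x : ℕ → X} (hx : x ∈ E.carrier) : 0 ≤ E.norm x := E.norm_nonneg x hx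

end InvariantSeqSpace

open Filter in
/-- **Theorem 1.4(a), second part (Botelho–Fávaro).**  If `f` is non-contractive, then
`C(E, f, 0) = {(x_j) ∈ E : (f(x_j)) ∉ c₀(Y)}` is either empty or spaceable in `E`. -/
theorem spaceability_of_C_zero {𝕂 X Y : Type*} [RCLike 𝕂]
    [NormedAddCommGroup X] [NormedSpace 𝕂 X] [CompleteSpace X]
    [NormedAddCommGroup Y] [NormedSpace 𝕂 Y] [CompleteSpace Y]
    (E : InvariantSeqSpace 𝕂 X) (f : X → Y) (hf : NonContractive (𝕂 := 𝕂) f) :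
    {x : ℕ → X | x ∈ E.carrier ∧ ¬ Tendsto (fun j => f (x j)) atTop (nhds 0)} = ∅ ∨
      Spaceable E
        {x : ℕ → X | x ∈ E.carrier ∧ ¬ Tendsto (fun j => f (x j)) atTop (nhds 0)} := by
  by_cases hA : {x : ℕ → X | x ∈ E.carrier ∧ ¬ Tendsto (fun j => f (x j)) atTop (nhds 0)} = ∅
  · exact Or.inl hA
  right
  obtain ⟨x, hxE, hxT⟩ : ∃ x : ℕ → X, x ∈ E.carrier ∧
      ¬ Tendsto (fun j => f (x j)) atTop (nhds 0) :=
    Set.nonempty_iff_ne_empty.mpr hA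
  -- extract ε > 0 with infinitely many bad coordinates
  obtain ⟨ε, hε, hbad⟩ : ∃ ε : ℝ, 0 < ε ∧ ∀ N, ∃ j ≥ N, ε ≤ ‖f (x j)‖ := by
    rw [Metric.tendsto_atTop] at hxT
    push_neg at hxT
    obtain ⟨ε, hε, hN⟩ := hxT
    refine ⟨ε, hε, fun N => ?_⟩
    obtain ⟨j, hj, h2⟩ := hN N
    exact ⟨j, hj, by simpa [dist_eq_norm] using h2⟩
  -- the support of x is infinite
  have hxne : ∀ j : ℕ, ε ≤ ‖f (x j)‖ → x j ≠ 0 := by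
    intro j hj h0
    rw [h0, hf.1, norm_zero] at hj
    linarith
  have hsupp : {j | x j ≠ 0}.Infinite := by
    intro hfin
    obtain ⟨b, hb⟩ := hfin.bddAbove
    obtain ⟨j, hj, hjε⟩ := hbad (b + 1)
    exact absurd (hb (hxne j hjε)) (by omega)
  -- the zero-free version x0 of x
  set x0 : ℕ → X := zeroFree x with hx0def
  have hx0 : x0 = fun k => x (Nat.nth (fun j => x j ≠ 0) k) := by
    rw [hx0def, zeroFree, if_pos hsupp]
  have hx0k : ∀ k, x0 k ≠ 0 := by
    intro k
    rw [hx0]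
    exact Nat.nth_mem_of_infinite hsupp k
  have hx0ne : x0 ≠ 0 := fun h => hx0k 0 (congrFun h 0)
  have hx0E : x0 ∈ E.carrier := (E.mem_iff_zeroFree_mem x hx0ne).mp hxE
  -- infinitely many bad coordinates of x0
  have hbadk : ∀ N, ∃ k ≥ N, ε ≤ ‖f (x0 k)‖ := by
    intro N
    set p : ℕ → Prop := fun j => x j ≠ 0 with hp
    obtain ⟨j, hj, hjε⟩ := hbad (Nat.nth p N + 1)
    have hpj : p j := hxne j hjε
    refine ⟨Nat.count p j, ?_, ?_⟩
    · by_contra hlt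
      push_neg at hlt
      have := (Nat.nth_strictMono hsupp).monotone hlt.le
      rw [Nat.nth_count hpj] at this
      omega
    · have hx0c : x0 (Nat.count p j) = x j := by
        rw [hx0]
        show x (Nat.nth p (Nat.count p j)) = x j
        rw [Nat.nth_count hpj]
      rw [hx0c]
      exact hjε
  -- the basic sequences y i, with disjoint supports, each a "copy" of x0
  set y : ℕ → ℕ → X := BFy x0 with hy
  have hzfy : ∀ i, zeroFree (y i) = x0 := fun i => zeroFree_BFy hx0k i
  have hyE : ∀ i, y i ∈ E.carrier := fun i =>
    (E.mem_iff_zeroFree_mem (y i) (by rw [hzfy]; exact hx0ne)).mpr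
      (by rw [hzfy]; exact hx0E)
  set S : Submodule 𝕂 (ℕ → X) := Submodule.span 𝕂 (Set.range y) with hS
  have hSle : S ≤ E.carrier := Submodule.span_le.mpr (Set.range_subset_iff.mpr hyE)
  -- representation of span elements
  have hrep : ∀ w ∈ S, ∃ c : ℕ → 𝕂, ∀ i k, w (Nat.pair i k) = c i • x0 k := by
    intro w hw
    induction hw using Submodule.span_induction with
    | mem w hw =>
        obtain ⟨i, rfl⟩ := hw
        refine ⟨fun i' => if i' = i then 1 else 0, fun i' k => ?_⟩
        rw [hy, BFy_pair]
        by_cases h : i' = i <;> simp [h]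
    | zero => exact ⟨0, fun i k => by simp⟩
    | add w₁ w₂ _ _ h₁ h₂ =>
        obtain ⟨c₁, hc₁⟩ := h₁
        obtain ⟨c₂, hc₂⟩ := h₂
        exact ⟨c₁ + c₂, fun i k => by simp [hc₁, hc₂, add_smul]⟩
    | smul a w _ h =>
        obtain ⟨c, hc⟩ := h
        exact ⟨a • c, fun i k => by simp [hc, smul_smul]⟩
  -- the candidate subspace: closure of S in E
  set Vset : Set (ℕ → X) := {z | z ∈ E.carrier ∧ ∃ u : ℕ → ℕ → X, (∀ n, u n ∈ S) ∧
    ∀ δ : ℝ, 0 < δ → ∃ N, ∀ n ≥ N, E.norm (u n - z) < δ} with hVset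
  have hSsub : ∀ w ∈ S, w ∈ Vset := by
    intro w hw
    refine ⟨hSle hw, fun _ => w, fun _ => hw, fun δ hδ => ⟨0, fun n _ => ?_⟩⟩
    simpa [E.norm_zero'] using hδ
  have hzeroV : (0 : ℕ → X) ∈ Vset := hSsub 0 (zero_mem _)
  have haddV : ∀ z₁ z₂ : ℕ → X, z₁ ∈ Vset → z₂ ∈ Vset → z₁ + z₂ ∈ Vset := by
    rintro z₁ z₂ ⟨hz₁, u₁, hu₁S, hu₁⟩ ⟨hz₂, u₂, hu₂S, hu₂⟩
    refine ⟨add_mem hz₁ hz₂, fun n => u₁ n + u₂ n,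
      fun n => add_mem (hu₁S n) (hu₂S n), fun δ hδ => ?_⟩
    obtain ⟨N₁, hN₁⟩ := hu₁ (δ / 2) (by positivity)
    obtain ⟨N₂, hN₂⟩ := hu₂ (δ / 2) (by positivity)
    refine ⟨max N₁ N₂, fun n hn => ?_⟩
    have h1 := hN₁ n (le_trans (le_max_left _ _) hn)
    have h2 := hN₂ n (le_trans (le_max_right _ _) hn)
    have heq : u₁ n + u₂ n - (z₁ + z₂) = (u₁ n - z₁) + (u₂ n - z₂) := by abel
    calc E.norm (u₁ n + u₂ n - (z₁ + z₂))
        ≤ E.norm (u₁ n - z₁) + E.norm (u₂ n - z₂) := by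
          rw [heq]
          exact E.norm_add_le _ (sub_mem (hSle (hu₁S n)) hz₁) _
            (sub_mem (hSle (hu₂S n)) hz₂)
      _ < δ / 2 + δ / 2 := add_lt_add h1 h2
      _ = δ := by ring
  have hsmulV : ∀ (a : 𝕂) (z : ℕ → X), z ∈ Vset → a • z ∈ Vset := by
    rintro a z ⟨hz, u, huS, hu⟩
    refine ⟨Submodule.smul_mem _ a hz, fun n => a • u n, fun n => Submodule.smul_mem _ a (huS n),
      fun δ hδ => ?_⟩
    obtain ⟨N, hN⟩ := hu (δ / (‖a‖ + 1)) (by positivity)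
    refine ⟨N, fun n hn => ?_⟩
    have heq : a • u n - a • z = a • (u n - z) := by rw [smul_sub]
    rw [heq, E.norm_smul a _ (sub_mem (hSle (huS n)) hz)]
    calc ‖a‖ * E.norm (u n - z) < (‖a‖ + 1) * (δ / (‖a‖ + 1)) := by
          apply mul_lt_mul' (by linarith) (hN n hn)
            (E.norm_nonneg' (sub_mem (hSle (huS n)) hz)) (by positivity)
      _ = δ := by field_simp
  set V : Submodule 𝕂 (ℕ → X) :=
    { carrier := Vset
      add_mem' := fun h1 h2 => haddV _ _ h1 h2
      zero_mem' := hzeroV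
      smul_mem' := fun a z h => hsmulV a z h } with hV
  have hmemV : ∀ z : ℕ → X, z ∈ V ↔ z ∈ Vset := fun z => Iff.rfl
  have hyV : ∀ i, y i ∈ V := fun i => hSsub (y i) (Submodule.subset_span ⟨i, rfl⟩)
  refine ⟨V, fun z hz => hz.1, ?_, ?_, ?_⟩
  · -- infinite-dimensionality
    have hli : LinearIndependent 𝕂 y := by
      rw [linearIndependent_iff']
      intro s g hg i hi
      have hcf := congrFun hg (Nat.pair i 0)
      simp only [Finset.sum_apply, Pi.smul_apply, Pi.zero_apply] at hcf
      rw [Finset.sum_eq_single i] at hcf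
      · rw [hy, BFy_pair, if_pos rfl] at hcf
        exact (smul_eq_zero.mp hcf).resolve_right (hx0k 0)
      · intro i' _ hi'
        rw [hy, BFy_pair, if_neg (Ne.symm hi'), smul_zero]
      · intro h
        exact absurd hi h
    have hliV : LinearIndependent 𝕂 (fun i => (⟨y i, hyV i⟩ : V)) := by
      apply LinearIndependent.of_comp V.subtype
      exact hli
    intro hfin
    have h1 := hliV.cardinal_lift_le_rank
    have h2 : Module.rank 𝕂 V < Cardinal.aleph0 := Module.rank_lt_aleph0 𝕂 V
    rw [Cardinal.mk_nat, Cardinal.lift_aleph0] at h1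
    have h3 : Cardinal.lift.{0} (Module.rank 𝕂 V) < Cardinal.aleph0 := by
      rwa [Cardinal.lift_lt_aleph0]
    exact absurd (lt_of_le_of_lt h1 h3) (lt_irrefl _)
  · -- V ⊆ A ∪ {0}
    rintro z ⟨hzE, u, huS, hconv⟩
    by_cases hz0 : z = 0
    · exact Or.inr hz0
    left
    refine ⟨hzE, ?_⟩
    have hcoord : ∀ j, Tendsto (fun n => u n j) atTop (nhds (z j)) := by
      intro j
      rw [Metric.tendsto_atTop]
      intro δ hδ
      obtain ⟨N, hN⟩ := hconv δ hδ
      refine ⟨N, fun n hn => ?_⟩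
      have hle : ‖u n j - z j‖ ≤ E.norm (u n - z) :=
        E.coord_norm_le _ (sub_mem (hSle (huS n)) hzE) j
      calc dist (u n j) (z j) = ‖u n j - z j‖ := dist_eq_norm _ _
        _ ≤ E.norm (u n - z) := hle
        _ < δ := hN n hn
    choose c hc using fun n => hrep (u n) (huS n)
    have hx00 : (0:ℝ) < ‖x0 0‖ := norm_pos_iff.mpr (hx0k 0)
    have hcc : ∀ i, ∃ b : 𝕂, Tendsto (fun n => c n i) atTop (nhds b) := by
      intro i
      have h0 : Tendsto (fun n => c n i • x0 0) atTop (nhds (z (Nat.pair i 0))) := by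
        have h0' := hcoord (Nat.pair i 0)
        simpa only [hc] using h0'
      have hcauchy : CauchySeq (fun n => c n i) := by
        rw [Metric.cauchySeq_iff]
        intro δ hδ
        have hC := h0.cauchySeq
        rw [Metric.cauchySeq_iff] at hC
        obtain ⟨N, hN⟩ := hC (δ * ‖x0 0‖) (by positivity)
        refine ⟨N, fun m hm n hn => ?_⟩
        have h2 := hN m hm n hn
        rw [dist_eq_norm] at h2 ⊢
        have h3 : ‖c m i - c n i‖ * ‖x0 0‖ < δ * ‖x0 0‖ := by
          calc ‖c m i - c n i‖ * ‖x0 0‖ = ‖(c m i - c n i) • x0 0‖ := (norm_smul _ _).symm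
            _ = ‖c m i • x0 0 - c n i • x0 0‖ := by rw [sub_smul]
            _ < δ * ‖x0 0‖ := h2
        exact lt_of_mul_lt_mul_right h3 hx00.le
      exact cauchySeq_tendsto_of_complete hcauchy
    choose a ha using hcc
    have hzf : ∀ i k, z (Nat.pair i k) = a i • x0 k := by
      intro i k
      have h1 : Tendsto (fun n => c n i • x0 k) atTop (nhds (a i • x0 k)) :=
        (ha i).smul_const (x0 k)
      have h2 : Tendsto (fun n => c n i • x0 k) atTop (nhds (z (Nat.pair i k))) := by
        have h2' := hcoord (Nat.pair i k)
        simpa only [hc] using h2'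
      exact tendsto_nhds_unique h2 h1
    obtain ⟨j, hj⟩ : ∃ j, z j ≠ 0 := by
      by_contra h
      push_neg at h
      exact hz0 (funext h)
    have hji : a (Nat.unpair j).1 ≠ 0 := by
      intro h0
      apply hj
      have h1 := hzf (Nat.unpair j).1 (Nat.unpair j).2
      rw [Nat.pair_unpair] at h1
      rw [h1, h0, zero_smul]
    obtain ⟨Ka, hKa, hKaf⟩ := hf.2 (a (Nat.unpair j).1) hji
    intro hT
    rw [Metric.tendsto_atTop] at hT
    obtain ⟨N, hN⟩ := hT (Ka * ε) (by positivity)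
    obtain ⟨k, hk, hkε⟩ := hbadk N
    have hjN : N ≤ Nat.pair (Nat.unpair j).1 k := le_trans hk (Nat.right_le_pair _ k)
    have h5 := hN (Nat.pair (Nat.unpair j).1 k) hjN
    rw [dist_zero_right, hzf (Nat.unpair j).1 k] at h5
    have h6 : Ka * ε ≤ ‖f (a (Nat.unpair j).1 • x0 k)‖ :=
      le_trans (mul_le_mul_of_nonneg_left hkε hKa.le) (hKaf (x0 k))
    linarith
  · -- closedness
    intro u hu z hzE hconv
    have hv : ∀ n : ℕ, ∃ v, v ∈ S ∧ E.norm (v - u n) < 1 / ((n:ℝ) + 1) := by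
      intro n
      obtain ⟨-, w, hwS, hw⟩ := hu n
      obtain ⟨N, hN⟩ := hw (1 / ((n:ℝ) + 1)) (by positivity)
      exact ⟨w N, hwS N, hN N le_rfl⟩
    choose v hvS hvlt using hv
    refine ⟨hzE, v, hvS, fun δ hδ => ?_⟩
    obtain ⟨N₁, hN₁⟩ := hconv (δ / 2) (by positivity)
    obtain ⟨N₂, hN₂⟩ : ∃ N₂ : ℕ, 1 / ((N₂:ℝ) + 1) < δ / 2 := exists_nat_one_div_lt (by positivity)
    refine ⟨max N₁ N₂, fun n hn => ?_⟩
    have h1 := hN₁ n (le_trans (le_max_left _ _) hn)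
    have h2 : (1:ℝ) / ((n:ℝ) + 1) ≤ 1 / ((N₂:ℝ) + 1) := by
      apply one_div_le_one_div_of_le (by positivity)
      have : N₂ ≤ n := le_trans (le_max_right _ _) hn
      exact_mod_cast by omega
    have heq : v n - z = (v n - u n) + (u n - z) := by abel
    have hm1 : v n - u n ∈ E.carrier := sub_mem (hSle (hvS n)) (hu n).1
    have hm2 : u n - z ∈ E.carrier := sub_mem (hu n).1 hzE
    calc E.norm (v n - z) ≤ E.norm (v n - u n) + E.norm (u n - z) := by
          rw [heq]; exact E.norm_add_le _ hm1 _ hm2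
      _ < 1 / ((n:ℝ) + 1) + δ / 2 := add_lt_add (hvlt n) h1
      _ ≤ 1 / ((N₂:ℝ) + 1) + δ / 2 := by linarith
      _ < δ / 2 + δ / 2 := by linarith
      _ = δ := by ring
end

section
/- Let X and Y be Banach spaces over 𝕂 (= ℝ or ℂ), let E be an invariant sequence space over X and let F be a strongly invariant sequence space over Y. If f : X → Y is compatible with F and the set A := { (x_j)_{j=1}^∞ ∈ E : (f(x_j))_{j=1}^∞ ∉ F } is nonempty, then A is spaceable in E. -/
open scoped Classical

section Aux

open Filter Topology

/-- `Nat.pair i` is strictly monotone in the second argument. -/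
lemma strictMono_natPair (i : ℕ) : StrictMono (Nat.pair i) :=
  fun _ _ h => Nat.pair_lt_pair_right i h

/-- `Nat.nth` of the image of an infinite set under a strictly monotone map. -/
lemma nth_image_strictMono {p : ℕ → Prop} (hp : {j | p j}.Infinite)
    {g : ℕ → ℕ} (hg : StrictMono g) {q : ℕ → Prop}
    (hq : {j | q j} = g '' {j | p j}) (k : ℕ) :
    Nat.nth q k = g (Nat.nth p k) := by
  have hqinf : {j | q j}.Infinite := by
    rw [hq]; exact hp.image hg.injective.injOn
  have h1 : StrictMono (g ∘ Nat.nth p) := hg.comp (Nat.nth_strictMono hp)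
  have h2 : Set.range (g ∘ Nat.nth p) = Set.range (Nat.nth q) := by
    rw [Set.range_comp, Nat.range_nth_of_infinite hp, Nat.range_nth_of_infinite hqinf, hq]
  exact congrFun (((Nat.nth_strictMono hqinf).range_inj h1).1 h2.symm) k

/-- The linear map sending a scalar sequence `c` to the `X`-valued sequence
`j ↦ c (unpair j).1 • x (unpair j).2`. -/
noncomputable def TLin (𝕂 : Type*) {X : Type*} [RCLike 𝕂] [NormedAddCommGroup X]
    [NormedSpace 𝕂 X] (x : ℕ → X) : (ℕ → 𝕂) →ₗ[𝕂] (ℕ → X) where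
  toFun c := fun j => c (Nat.unpair j).1 • x (Nat.unpair j).2
  map_add' c d := by funext j; simp [add_smul]
  map_smul' a c := by funext j; simp [mul_smul]

@[simp] lemma TLin_apply {𝕂 X : Type*} [RCLike 𝕂] [NormedAddCommGroup X]
    [NormedSpace 𝕂 X] (x : ℕ → X) (c : ℕ → 𝕂) (j : ℕ) :
    TLin 𝕂 x c j = c (Nat.unpair j).1 • x (Nat.unpair j).2 := rfl

end Aux

/-- **Corollary 2.9.**  If `E` is an invariant sequence space over `X`, `F` is a strongly
invariant sequence space over `Y`, `f : X → Y` is compatible with `F` and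
`A = {(x_j) ∈ E : (f(x_j)) ∉ F}` is nonempty, then `A` is spaceable in `E`. -/
theorem spaceability_of_A {𝕂 X Y : Type*} [RCLike 𝕂]
    [NormedAddCommGroup X] [NormedSpace 𝕂 X] [CompleteSpace X]
    [NormedAddCommGroup Y] [NormedSpace 𝕂 Y] [CompleteSpace Y]
    (E : InvariantSeqSpace 𝕂 X) (F : StronglyInvariantSeqSpace 𝕂 Y)
    (f : X → Y) (hf : Compatible f F.toInvariantSeqSpace)
    (hA : {x : ℕ → X | x ∈ E.carrier ∧ (fun j => f (x j)) ∉ F.carrier}.Nonempty) :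
    Spaceable E {x : ℕ → X | x ∈ E.carrier ∧ (fun j => f (x j)) ∉ F.carrier} := by
  classical
  obtain ⟨x, hxE, hxF⟩ := hA
  -- `x` has infinitely many nonzero coordinates
  have hinf : {j | x j ≠ 0}.Infinite := by
    by_contra hfin
    rw [Set.not_infinite] at hfin
    apply hxF
    apply F.c00_subset
    apply hfin.subset
    intro j hj
    simp only [Set.mem_setOf_eq] at hj ⊢
    intro h0
    apply hj
    rw [h0, hf.1]
  have hzx : zeroFree x = fun k => x (Nat.nth (fun j => x j ≠ 0) k) := by
    rw [zeroFree, if_pos hinf]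
  have hzx0 : zeroFree x ≠ 0 := by
    rw [hzx]
    intro h
    have h0 := congrFun h 0
    simp only [Pi.zero_apply] at h0
    exact Nat.nth_mem_of_infinite hinf 0 h0
  have hzxE : zeroFree x ∈ E.carrier := (E.mem_iff_zeroFree_mem x hzx0).1 hxE
  obtain ⟨k₀, hk₀⟩ := hinf.nonempty
  have hk₀ : x k₀ ≠ 0 := hk₀
  -- the subspace
  set W : Submodule 𝕂 (ℕ → X) := LinearMap.range (TLin 𝕂 x) with hW
  set V : Submodule 𝕂 (ℕ → X) := E.carrier ⊓ W with hV
  -- the basic vectors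
  set y : ℕ → (ℕ → X) := fun i => TLin 𝕂 x (fun l => if l = i then (1 : 𝕂) else 0) with hy
  have hy_apply : ∀ i j, y i j = if (Nat.unpair j).1 = i then x (Nat.unpair j).2 else 0 := by
    intro i j
    simp only [hy, TLin_apply, ite_smul, one_smul, zero_smul]
  have hyset : ∀ i, {j | y i j ≠ 0} = Nat.pair i '' {k | x k ≠ 0} := by
    intro i
    ext j
    simp only [Set.mem_setOf_eq, Set.mem_image, hy_apply]
    constructor
    · intro hj
      by_cases h : (Nat.unpair j).1 = i
      · refine ⟨(Nat.unpair j).2, ?_, ?_⟩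
        · intro h0
          apply hj
          rw [if_pos h, h0]
        · rw [← h, Nat.pair_unpair]
      · exact absurd (if_neg h) (fun h' => hj h')
    · rintro ⟨k, hk, rfl⟩
      rw [Nat.unpair_pair]
      simpa using hk
  have hzy : ∀ i, zeroFree (y i) = zeroFree x := by
    intro i
    have hqinf : {j | y i j ≠ 0}.Infinite := by
      rw [hyset i]; exact hinf.image (strictMono_natPair i).injective.injOn
    rw [zeroFree, if_pos hqinf, hzx]
    funext k
    rw [nth_image_strictMono hinf (strictMono_natPair i) (hyset i) k, hy_apply,
      Nat.unpair_pair]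
    simp
  have hyE : ∀ i, y i ∈ E.carrier := by
    intro i
    have h0 : zeroFree (y i) ≠ 0 := by rw [hzy i]; exact hzx0
    rw [E.mem_iff_zeroFree_mem _ h0, hzy i]
    exact hzxE
  have hyV : ∀ i, y i ∈ V := fun i => Submodule.mem_inf.2 ⟨hyE i, ⟨_, rfl⟩⟩
  refine ⟨V, inf_le_left, ?_, ?_, ?_⟩
  · -- infinite dimensionality
    intro hfin
    haveI : Module.Finite 𝕂 V := hfin
    haveI : IsNoetherian 𝕂 V := IsNoetherian.iff_fg.2 hfin
    have hLI : LinearIndependent 𝕂 y := by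
      rw [linearIndependent_iff']
      intro s g hsum i hi
      have hcf := congrFun hsum (Nat.pair i k₀)
      simp only [Finset.sum_apply, Pi.smul_apply, Pi.zero_apply] at hcf
      rw [Finset.sum_eq_single i] at hcf
      · rw [hy_apply, Nat.unpair_pair, if_pos rfl] at hcf
        rcases smul_eq_zero.1 hcf with h | h
        · exact h
        · exact absurd h hk₀
      · intro l hl hne
        rw [hy_apply, Nat.unpair_pair, if_neg (Ne.symm hne), smul_zero]
      · intro h
        exact absurd hi h
    have hLIV : LinearIndependent 𝕂 (fun i : ℕ => (⟨y i, hyV i⟩ : V)) :=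
      LinearIndependent.of_comp V.subtype (by exact hLI)
    haveI : Finite ℕ := hLIV.finite_of_isNoetherian
    exact not_finite ℕ
  · -- V ⊆ A ∪ {0}
    intro z hz
    obtain ⟨hzE, hzW⟩ := Submodule.mem_inf.1 hz
    obtain ⟨c, rfl⟩ := hzW
    by_cases hz0 : TLin 𝕂 x c = 0
    · right
      exact hz0
    · left
      obtain ⟨j, hj⟩ : ∃ j, TLin 𝕂 x c j ≠ 0 := by
        by_contra h
        push_neg at h
        exact hz0 (funext h)
      have hci : c (Nat.unpair j).1 ≠ 0 := by
        intro h
        apply hj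
        rw [TLin_apply, h, zero_smul]
      refine ⟨hzE, ?_⟩
      intro hmem
      have hsubseq := (F.mem_iff_subseq _).1 hmem (fun k => Nat.pair (Nat.unpair j).1 k)
        (strictMono_natPair _)
      have heq : (fun k => (fun j' => f (TLin 𝕂 x c j')) (Nat.pair (Nat.unpair j).1 k)) =
          fun k => f (c (Nat.unpair j).1 • x k) := by
        funext k
        simp only [TLin_apply, Nat.unpair_pair]
      rw [heq] at hsubseq
      exact hf.2 x (c (Nat.unpair j).1) hci hxF hsubseq
  · -- closedness
    intro u hu z hzE hconv
    have huE : ∀ n, u n ∈ E.carrier := fun n => (Submodule.mem_inf.1 (hu n)).1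
    have huW : ∀ n, u n ∈ W := fun n => (Submodule.mem_inf.1 (hu n)).2
    choose cs hcs using huW
    have hcoord : ∀ j, Filter.Tendsto (fun n => u n j) Filter.atTop (nhds (z j)) := by
      intro j
      rw [Metric.tendsto_atTop]
      intro ε hε
      obtain ⟨N, hN⟩ := hconv ε hε
      refine ⟨N, fun n hn => ?_⟩
      have hm : u n - z ∈ E.carrier := Submodule.sub_mem _ (huE n) hzE
      have hc := E.coord_norm_le _ hm j
      rw [dist_eq_norm]
      calc ‖u n j - z j‖ = ‖(u n - z) j‖ := by rw [Pi.sub_apply]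
        _ ≤ E.norm (u n - z) := hc
        _ < ε := hN n hn
    have hxk₀pos : (0 : ℝ) < ‖x k₀‖ := norm_pos_iff.2 hk₀
    have hcs_conv : ∀ i, ∃ L : 𝕂, Filter.Tendsto (fun n => cs n i) Filter.atTop (nhds L) := by
      intro i
      have heq : (fun n => cs n i • x k₀) = fun n => u n (Nat.pair i k₀) := by
        funext n
        rw [← hcs n, TLin_apply, Nat.unpair_pair]
      have h1 : Filter.Tendsto (fun n => cs n i • x k₀) Filter.atTop
          (nhds (z (Nat.pair i k₀))) := by
        rw [heq]; exact hcoord (Nat.pair i k₀)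
      have hC : CauchySeq (fun n => cs n i) := by
        rw [Metric.cauchySeq_iff]
        intro ε hε
        have h2 := h1.cauchySeq
        rw [Metric.cauchySeq_iff] at h2
        obtain ⟨N, hN⟩ := h2 (ε * ‖x k₀‖) (by positivity)
        refine ⟨N, fun m hm n hn => ?_⟩
        have h3 := hN m hm n hn
        rw [dist_eq_norm] at h3 ⊢
        rw [← sub_smul, norm_smul] at h3
        exact lt_of_mul_lt_mul_right h3 hxk₀pos.le
      exact cauchySeq_tendsto_of_complete hC
    choose c hc using hcs_conv
    have hzW : z ∈ W := by
      refine ⟨c, ?_⟩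
      funext j
      have h1 : Filter.Tendsto (fun n => cs n (Nat.unpair j).1 • x (Nat.unpair j).2)
          Filter.atTop (nhds (z j)) := by
        have heq : (fun n => cs n (Nat.unpair j).1 • x (Nat.unpair j).2) =
            fun n => u n j := by
          funext n
          rw [← hcs n, TLin_apply]
        rw [heq]; exact hcoord j
      have h2 : Filter.Tendsto (fun n => cs n (Nat.unpair j).1 • x (Nat.unpair j).2)
          Filter.atTop (nhds (c (Nat.unpair j).1 • x (Nat.unpair j).2)) :=
        (hc (Nat.unpair j).1).smul_const _
      exact tendsto_nhds_unique h2 h1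
    exact Submodule.mem_inf.2 ⟨hzE, hzW⟩
end

section
/- Let X and Y be Banach spaces over 𝕂 (= ℝ or ℂ), let E be an invariant sequence space over X, let Γ ⊆ (0, ∞] and let f : X → Y be strongly non-contractive. Then the set C^w(E, f, Γ) = { (x_j)_{j=1}^∞ ∈ E : (f(x_j))_{j=1}^∞ ∉ ⋃_{q∈Γ} ℓ_q^w(Y) } is either empty or spaceable in E. -/
open scoped Classical

/-- `f : X → Y` is strongly non-contractive: `f 0 = 0` and for every scalar `α ≠ 0` there
is `K(α) > 0` with `|φ(f(αx))| ≥ K(α)|φ(f(x))|` for all `x ∈ X` and all `φ ∈ Y'`. -/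
def StronglyNonContractive {𝕂 X Y : Type*} [RCLike 𝕂]
    [NormedAddCommGroup X] [NormedSpace 𝕂 X] [NormedAddCommGroup Y] [NormedSpace 𝕂 Y]
    (f : X → Y) : Prop :=
  f 0 = 0 ∧ ∀ a : 𝕂, a ≠ 0 → ∃ K : ℝ, 0 < K ∧
    ∀ (x : X) (φ : Y →L[𝕂] 𝕂), K * ‖φ (f x)‖ ≤ ‖φ (f (a • x))‖

/-- Membership in `ℓ_q^w(Y)` for `0 < q ≤ ∞`: for `q < ∞`, `Σ |φ(y_j)|^q < ∞` for every
`φ ∈ Y'`; for `q = ∞`, `ℓ_∞^w(Y) = ℓ_∞(Y)` is the space of bounded sequences. -/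
def MemLqWeak {𝕂 Y : Type*} [RCLike 𝕂] [NormedAddCommGroup Y] [NormedSpace 𝕂 Y]
    (q : ENNReal) (y : ℕ → Y) : Prop :=
  if q = ⊤ then ∃ C : ℝ, ∀ j, ‖y j‖ ≤ C
  else ∀ φ : Y →L[𝕂] 𝕂, Summable fun j => ‖φ (y j)‖ ^ q.toReal


private def eFun (i k : ℕ) : ℕ := 2^i * (2*k+1) - 1

private lemma eFun_def (i k : ℕ) : eFun i k + 1 = 2^i * (2*k+1) := by
  have h1 : 1 ≤ 2^i * (2*k+1) :=
    Nat.one_le_iff_ne_zero.mpr (by positivity)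
  unfold eFun; omega

private lemma eFun_strictMono (i : ℕ) : StrictMono (eFun i) := by
  intro k k' h
  have h1 := eFun_def i k; have h2 := eFun_def i k'
  have hp : 0 < 2^i := pow_pos (by norm_num) i
  have h3 : 2^i * (2*k+1) < 2^i * (2*k'+1) := by
    exact Nat.mul_lt_mul_of_le_of_lt le_rfl (by omega) hp
  omega

private lemma two_pow_mul_odd_inj :
    ∀ i i' k k' : ℕ, 2^i * (2*k+1) = 2^i' * (2*k'+1) → i = i' ∧ k = k' := by
  intro i
  induction i with
  | zero =>
    intro i' k k' h
    cases i' with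
    | zero => simp at h; omega
    | succ m =>
      exfalso
      rw [pow_succ] at h
      have h2 : 2*k+1 = 2 * (2^m * (2*k'+1)) := by
        calc 2*k+1 = 2^0 * (2*k+1) := by ring
          _ = 2^m * 2 * (2*k'+1) := h
          _ = 2 * (2^m * (2*k'+1)) := by ring
      omega
  | succ n ih =>
    intro i' k k' h
    cases i' with
    | zero =>
      exfalso
      rw [pow_succ] at h
      have h2 : 2 * (2^n * (2*k+1)) = 2*k'+1 := by
        calc 2 * (2^n * (2*k+1)) = 2^n * 2 * (2*k+1) := by ring
          _ = 2^0 * (2*k'+1) := h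
          _ = 2*k'+1 := by ring
      omega
    | succ m =>
      rw [pow_succ, pow_succ] at h
      have h2 : 2 * (2^n * (2*k+1)) = 2 * (2^m * (2*k'+1)) := by
        calc 2 * (2^n * (2*k+1)) = 2^n * 2 * (2*k+1) := by ring
          _ = 2^m * 2 * (2*k'+1) := h
          _ = 2 * (2^m * (2*k'+1)) := by ring
      have h3 := Nat.eq_of_mul_eq_mul_left (by norm_num : 0 < 2) h2
      obtain ⟨hi, hk⟩ := ih m k k' h3
      exact ⟨by omega, hk⟩

private lemma eFun_inj {i i' k k' : ℕ} (h : eFun i k = eFun i' k') : i = i' ∧ k = k' := by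
  have h1 := eFun_def i k; have h2 := eFun_def i' k'
  exact two_pow_mul_odd_inj i i' k k' (by omega)

private lemma eFun_surj (j : ℕ) : ∃ i k, eFun i k = j := by
  have hj : j + 1 ≠ 0 := Nat.succ_ne_zero j
  set i := (j+1).factorization 2 with hi
  have hdvd : 2^i ∣ j+1 := Nat.ordProj_dvd (j+1) 2
  obtain ⟨m, hm⟩ := hdvd
  have hp : 0 < 2^i := pow_pos (by norm_num) i
  have hself : 2^i * ordCompl[2] (j+1) = j+1 := Nat.ordProj_mul_ordCompl_eq_self (j+1) 2
  have hmo : m = ordCompl[2] (j+1) := Nat.eq_of_mul_eq_mul_left hp (by rw [hself, ← hm])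
  have hodd : ¬ 2 ∣ m := by
    rw [hmo]; exact Nat.not_dvd_ordCompl Nat.prime_two hj
  obtain ⟨k, hk⟩ : ∃ k, m = 2*k+1 := ⟨m/2, by omega⟩
  refine ⟨i, k, ?_⟩
  have h2 : 2^i*(2*k+1) = j+1 := by rw [← hk, ← hm]
  have := eFun_def i k
  omega

private lemma nth_eq_of_range {p : ℕ → Prop} {g : ℕ → ℕ} (hg : StrictMono g)
    (h : setOf p = Set.range g) : Nat.nth p = g := by
  have hinf : (setOf p).Infinite := by
    rw [h]; exact Set.infinite_range_of_injective hg.injective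
  exact ((Nat.nth_strictMono hinf).range_inj hg).1
    (by rw [Nat.range_nth_of_infinite hinf]; exact h)

/-- **Theorem 1.4(b) (Botelho–Fávaro).**  If `f` is strongly non-contractive and
`Γ ⊆ (0, ∞]`, then `C^w(E, f, Γ) = {(x_j) ∈ E : (f(x_j)) ∉ ⋃_{q ∈ Γ} ℓ_q^w(Y)}` is
either empty or spaceable in `E`. -/
theorem spaceability_of_Cw {𝕂 X Y : Type*} [RCLike 𝕂]
    [NormedAddCommGroup X] [NormedSpace 𝕂 X] [CompleteSpace X]
    [NormedAddCommGroup Y] [NormedSpace 𝕂 Y] [CompleteSpace Y]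
    (E : InvariantSeqSpace 𝕂 X) (Γ : Set ENNReal) (hΓ : ∀ q ∈ Γ, 0 < q)
    (f : X → Y) (hf : StronglyNonContractive (𝕂 := 𝕂) f) :
    {x : ℕ → X | x ∈ E.carrier ∧
        ∀ q ∈ Γ, ¬ MemLqWeak (𝕂 := 𝕂) q fun j => f (x j)} = ∅ ∨
      Spaceable E {x : ℕ → X | x ∈ E.carrier ∧
        ∀ q ∈ Γ, ¬ MemLqWeak (𝕂 := 𝕂) q fun j => f (x j)} := by
  set A := {x : ℕ → X | x ∈ E.carrier ∧
      ∀ q ∈ Γ, ¬ MemLqWeak (𝕂 := 𝕂) q fun j => f (x j)} with hAdef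
  by_cases hΓe : Γ = ∅
  · subst hΓe
    right
    refine ⟨E.carrier, le_rfl, E.infiniteDimensional, ?_, ?_⟩
    · intro z hz
      exact Or.inl ⟨hz, fun q hq => absurd hq (Set.notMem_empty q)⟩
    · intro u hu z hz _
      exact hz
  by_cases hAe : A = ∅
  · exact Or.inl hAe
  right
  obtain ⟨x, hx⟩ := Set.nonempty_iff_ne_empty.2 hAe
  obtain ⟨q₀, hq₀⟩ := Set.nonempty_iff_ne_empty.2 hΓe
  -- the support of x is infinite
  have hS : {j | x j ≠ 0}.Infinite := by
    by_contra hfin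
    rw [Set.not_infinite] at hfin
    refine absurd ?_ (hx.2 q₀ hq₀)
    simp only [MemLqWeak]
    by_cases hq : q₀ = ⊤
    · rw [if_pos hq]
      refine ⟨∑ j ∈ hfin.toFinset, ‖f (x j)‖, fun j => ?_⟩
      by_cases hj : x j ≠ 0
      · exact Finset.single_le_sum (f := fun j => ‖f (x j)‖) (fun i _ => norm_nonneg _) (hfin.mem_toFinset.2 hj)
      · push_neg at hj
        rw [hj, hf.1, norm_zero]
        exact Finset.sum_nonneg fun i _ => norm_nonneg _
    · rw [if_neg hq]
      intro φ
      have ht : 0 < q₀.toReal := ENNReal.toReal_pos (hΓ q₀ hq₀).ne' hq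
      apply summable_of_finite_support
      apply hfin.subset
      intro j hj
      simp only [Function.mem_support] at hj
      by_contra hxj
      simp only [Set.mem_setOf_eq, not_not] at hxj
      exact hj (by rw [hxj, hf.1, map_zero, norm_zero, Real.zero_rpow ht.ne'])
  set w := zeroFree x with hwdef
  have hw_eq : ∀ k, w k = x (Nat.nth (fun j => x j ≠ 0) k) := by
    intro k
    rw [hwdef]
    simp only [zeroFree]
    rw [if_pos hS]
  have hwk : ∀ k, w k ≠ 0 := fun k => by
    rw [hw_eq]; exact Nat.nth_mem_of_infinite hS k
  have hw0 : w ≠ 0 := fun h => hwk 0 (by rw [h]; rfl)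
  have hwE : w ∈ E.carrier := (E.mem_iff_zeroFree_mem x hw0).1 hx.1
  -- transfer failure of weak summability from x to w
  have hnw : ∀ q ∈ Γ, ¬ MemLqWeak (𝕂 := 𝕂) q fun k => f (w k) := by
    intro q hq hmem
    refine absurd ?_ (hx.2 q hq)
    simp only [MemLqWeak] at hmem ⊢
    by_cases hqt : q = ⊤
    · rw [if_pos hqt] at hmem ⊢
      obtain ⟨C, hC⟩ := hmem
      refine ⟨max C 0, fun j => ?_⟩
      by_cases hj : x j ≠ 0
      · obtain ⟨k, hk⟩ := Nat.subset_range_nth (p := fun j => x j ≠ 0) hj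
        calc ‖f (x j)‖ = ‖f (w k)‖ := by rw [hw_eq, hk]
          _ ≤ C := hC k
          _ ≤ max C 0 := le_max_left _ _
      · push_neg at hj
        rw [hj, hf.1, norm_zero]
        exact le_max_right _ _
    · rw [if_neg hqt] at hmem ⊢
      intro φ
      have ht : 0 < q.toReal := ENNReal.toReal_pos (hΓ q hq).ne' hqt
      rw [← (Nat.nth_injective hS).summable_iff
        (f := fun j => ‖φ (f (x j))‖ ^ q.toReal) ?_]
      · refine (hmem φ).congr fun k => ?_
        simp only [Function.comp_apply]
        rw [hw_eq]
      · intro j hj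
        rw [Nat.range_nth_of_infinite hS] at hj
        simp only [Set.mem_setOf_eq, not_not] at hj
        show ‖φ (f (x j))‖ ^ q.toReal = 0
        rw [hj, hf.1, map_zero, norm_zero, Real.zero_rpow ht.ne']
  -- the basic vectors
  set u : ℕ → ℕ → X :=
    fun i j => if h : ∃ k, eFun i k = j then w h.choose else 0 with hudef
  have hue : ∀ i k, u i (eFun i k) = w k := by
    intro i k
    have hex : ∃ k', eFun i k' = eFun i k := ⟨k, rfl⟩
    simp only [hudef]
    rw [dif_pos hex]
    congr 1
    exact (eFun_inj hex.choose_spec).2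
  have huo : ∀ i j, (¬ ∃ k, eFun i k = j) → u i j = 0 := by
    intro i j h
    simp only [hudef]
    exact dif_neg h
  have hsupp : ∀ i, {j | u i j ≠ 0} = Set.range (eFun i) := by
    intro i
    ext j
    simp only [Set.mem_setOf_eq, Set.mem_range]
    constructor
    · intro hj
      by_contra hno
      push_neg at hno
      exact hj (huo i j (by push_neg; exact hno))
    · rintro ⟨k, rfl⟩
      rw [hue]
      exact hwk k
  have hnth : ∀ i, Nat.nth (fun j => u i j ≠ 0) = eFun i := fun i =>
    nth_eq_of_range (eFun_strictMono i) (hsupp i)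
  have hzfu : ∀ i, zeroFree (u i) = w := by
    intro i
    have hinf : {j | u i j ≠ 0}.Infinite := by
      rw [hsupp i]
      exact Set.infinite_range_of_injective (eFun_strictMono i).injective
    unfold zeroFree
    rw [if_pos hinf, hnth i]
    funext k
    exact hue i k
  have hzfu0 : ∀ i, zeroFree (u i) ≠ 0 := fun i => by rw [hzfu i]; exact hw0
  have huE : ∀ i, u i ∈ E.carrier := fun i =>
    (E.mem_iff_zeroFree_mem (u i) (hzfu0 i)).2 (by rw [hzfu i]; exact hwE)
  -- the subspace
  let V : Submodule 𝕂 (ℕ → X) :=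
    { carrier := {z | z ∈ E.carrier ∧ ∀ i, ∃ a : 𝕂, ∀ k, z (eFun i k) = a • w k}
      add_mem' := by
        rintro a b ⟨haE, ha⟩ ⟨hbE, hb⟩
        refine ⟨E.carrier.add_mem haE hbE, fun i => ?_⟩
        obtain ⟨ca, hca⟩ := ha i
        obtain ⟨cb, hcb⟩ := hb i
        exact ⟨ca + cb, fun k => by
          simp only [Pi.add_apply, hca k, hcb k, add_smul]⟩
      zero_mem' := ⟨E.carrier.zero_mem, fun i => ⟨0, fun k => by simp⟩⟩
      smul_mem' := by
        rintro c a ⟨haE, ha⟩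
        refine ⟨E.carrier.smul_mem c haE, fun i => ?_⟩
        obtain ⟨ca, hca⟩ := ha i
        exact ⟨c * ca, fun k => by simp only [Pi.smul_apply, hca k, smul_smul]⟩ }
  have hmemV : ∀ z : ℕ → X, z ∈ V ↔
      (z ∈ E.carrier ∧ ∀ i, ∃ a : 𝕂, ∀ k, z (eFun i k) = a • w k) := fun z => Iff.rfl
  have huV : ∀ i, u i ∈ V := by
    intro i
    refine (hmemV _).2 ⟨huE i, fun i' => ?_⟩
    by_cases hii : i' = i
    · subst hii
      exact ⟨1, fun k => by rw [hue, one_smul]⟩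
    · refine ⟨0, fun k => ?_⟩
      rw [zero_smul]
      refine huo i (eFun i' k) ?_
      rintro ⟨k', hk'⟩
      exact hii ((eFun_inj hk').1).symm
  refine ⟨V, fun z hz => ((hmemV z).1 hz).1, ?_, ?_, ?_⟩
  · -- infinite dimensional
    intro hfin
    haveI := hfin
    have hli : LinearIndependent 𝕂 u := by
      rw [linearIndependent_iff']
      intro s g hsum i hi
      have h0 := congrFun hsum (eFun i 0)
      rw [Finset.sum_apply] at h0
      have h1 : ∑ i' ∈ s, g i' • u i' (eFun i 0) = 0 := by
        simpa only [Pi.smul_apply, Pi.zero_apply] using h0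
      have h2 : ∑ i' ∈ s, g i' • u i' (eFun i 0) = g i • u i (eFun i 0) :=
        Finset.sum_eq_single_of_mem i hi (fun i' _ hne => by
          rw [huo i' (eFun i 0) (by rintro ⟨k', hk'⟩; exact hne (eFun_inj hk').1),
            smul_zero])
      rw [h2, hue] at h1
      rcases smul_eq_zero.1 h1 with h | h
      · exact h
      · exact absurd h (hwk 0)
    have hliV : LinearIndependent 𝕂 (fun i => (⟨u i, huV i⟩ : V)) := by
      apply LinearIndependent.of_comp V.subtype
      exact hli
    exact Module.Finite.not_linearIndependent_of_infinite _ hliV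
  · -- contained in A ∪ {0}
    intro z hz
    obtain ⟨hzE, hza⟩ := (hmemV z).1 hz
    by_cases hz0 : z = 0
    · exact Or.inr hz0
    left
    refine ⟨hzE, fun q hq hmem => ?_⟩
    obtain ⟨j, hj⟩ : ∃ j, z j ≠ 0 := by
      by_contra hno
      push_neg at hno
      exact hz0 (funext hno)
    obtain ⟨i, k0, rfl⟩ := eFun_surj j
    obtain ⟨a, ha⟩ := hza i
    have hane : a ≠ 0 := by
      intro h
      exact hj (by rw [ha k0, h, zero_smul])
    obtain ⟨Ka, hKa, hKf⟩ := hf.2 a hane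
    refine hnw q hq ?_
    simp only [MemLqWeak] at hmem ⊢
    by_cases hqt : q = ⊤
    · rw [if_pos hqt] at hmem ⊢
      obtain ⟨C, hC⟩ := hmem
      have hC0 : 0 ≤ C := le_trans (norm_nonneg _) (hC 0)
      refine ⟨C / Ka, fun k => ?_⟩
      by_cases hfw : f (w k) = 0
      · rw [hfw, norm_zero]
        positivity
      obtain ⟨φ, hφ1, hφe⟩ := exists_dual_vector 𝕂 (f (w k)) (norm_ne_zero_iff.mpr hfw)
      have h1 : Ka * ‖f (w k)‖ ≤ ‖φ (f (a • w k))‖ := by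
        have h := hKf (w k) φ
        rwa [hφe, RCLike.norm_ofReal, abs_norm] at h
      have h2 : ‖φ (f (a • w k))‖ ≤ ‖f (a • w k)‖ := by
        calc ‖φ (f (a • w k))‖ ≤ ‖φ‖ * ‖f (a • w k)‖ := φ.le_opNorm _
          _ = ‖f (a • w k)‖ := by rw [hφ1, one_mul]
      have h3 : ‖f (a • w k)‖ ≤ C := by
        rw [← ha k]
        exact hC (eFun i k)
      rw [le_div_iff₀ hKa, mul_comm]
      exact le_trans h1 (le_trans h2 h3)
    · rw [if_neg hqt] at hmem ⊢
      intro φ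
      have ht : 0 < q.toReal := ENNReal.toReal_pos (hΓ q hq).ne' hqt
      have hsub : Summable (fun k => ‖φ (f (z (eFun i k)))‖ ^ q.toReal) :=
        (hmem φ).comp_injective (eFun_strictMono i).injective
      have hsub2 : Summable (fun k => ‖φ (f (a • w k))‖ ^ q.toReal) :=
        hsub.congr fun k => by rw [ha k]
      refine Summable.of_nonneg_of_le
        (fun k => Real.rpow_nonneg (norm_nonneg _) _) (fun k => ?_)
        (hsub2.mul_left (Ka⁻¹ ^ q.toReal))
      have h1 : ‖φ (f (w k))‖ ≤ Ka⁻¹ * ‖φ (f (a • w k))‖ := by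
        have h := hKf (w k) φ
        have h' := mul_le_mul_of_nonneg_left h (inv_nonneg.2 hKa.le)
        rwa [inv_mul_cancel_left₀ hKa.ne'] at h'
      calc ‖φ (f (w k))‖ ^ q.toReal
          ≤ (Ka⁻¹ * ‖φ (f (a • w k))‖) ^ q.toReal :=
            Real.rpow_le_rpow (norm_nonneg _) h1 ht.le
        _ = Ka⁻¹ ^ q.toReal * ‖φ (f (a • w k))‖ ^ q.toReal :=
            Real.mul_rpow (inv_nonneg.2 hKa.le) (norm_nonneg _)
  · -- closed
    intro u' hu' z hzE hlim
    refine (hmemV z).2 ⟨hzE, fun i => ?_⟩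
    have hcoord : ∀ j, Filter.Tendsto (fun n => u' n j) Filter.atTop (nhds (z j)) := by
      intro j
      rw [NormedAddCommGroup.tendsto_atTop]
      intro ε hε
      obtain ⟨N, hN⟩ := hlim ε hε
      refine ⟨N, fun n hn => ?_⟩
      have hmem := E.carrier.sub_mem (((hmemV _).1 (hu' n)).1) hzE
      calc ‖u' n j - z j‖ = ‖(u' n - z) j‖ := rfl
        _ ≤ E.norm (u' n - z) := E.coord_norm_le _ hmem j
        _ < ε := hN n hn
    have hw0ne : w 0 ≠ 0 := hwk 0
    obtain ⟨φ₀, hφ₀1, hφ₀e⟩ := exists_dual_vector 𝕂 (w 0) (norm_ne_zero_iff.mpr hw0ne)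
    have hnorm0 : (‖w 0‖ : 𝕂) ≠ 0 := by
      simp only [ne_eq, RCLike.ofReal_eq_zero, norm_eq_zero]
      exact hw0ne
    set an : ℕ → 𝕂 := fun n => Classical.choose (((hmemV _).1 (hu' n)).2 i) with han
    have hanspec : ∀ n k, u' n (eFun i k) = an n • w k := fun n =>
      Classical.choose_spec (((hmemV _).1 (hu' n)).2 i)
    set a : 𝕂 := φ₀ (z (eFun i 0)) / (‖w 0‖ : 𝕂) with haa
    have htan : Filter.Tendsto an Filter.atTop (nhds a) := by
      have h1 : Filter.Tendsto (fun n => φ₀ (u' n (eFun i 0))) Filter.atTop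
          (nhds (φ₀ (z (eFun i 0)))) :=
        (φ₀.continuous.tendsto _).comp (hcoord (eFun i 0))
      have h2 : ∀ n, an n = φ₀ (u' n (eFun i 0)) / (‖w 0‖ : 𝕂) := by
        intro n
        rw [hanspec n 0, map_smul, hφ₀e, smul_eq_mul, mul_div_cancel_right₀ _ hnorm0]
      rw [show an = fun n => φ₀ (u' n (eFun i 0)) / (‖w 0‖ : 𝕂) from funext h2, haa]
      exact h1.div_const _
    refine ⟨a, fun k => ?_⟩
    have ht1 : Filter.Tendsto (fun n => u' n (eFun i k)) Filter.atTop (nhds (a • w k)) := by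
      refine (htan.smul_const (w k)).congr fun n => (hanspec n k).symm
    exact tendsto_nhds_unique (hcoord (eFun i k)) ht1
end

section
/- Let Y be a Banach space over 𝕂 (= ℝ or ℂ) and let F be a strongly invariant sequence space over 𝕂. Then for every x ∈ Y^ℕ with x⁰ ≠ 0, x ∈ F^w(Y) if and only if x⁰ ∈ F^w(Y). -/
open scoped Classical

/-- For an invariant sequence space `F` over the scalar field `𝕂` and a Banach space `Y`,
`F^w(Y) = {(x_j) ∈ Y^ℕ : (φ(x_j))_j ∈ F for every φ ∈ Y'}`. -/
def weakSpace {𝕂 : Type*} [RCLike 𝕂] (F : InvariantSeqSpace 𝕂 𝕂)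
    (Y : Type*) [NormedAddCommGroup Y] [NormedSpace 𝕂 Y] : Set (ℕ → Y) :=
  {x | ∀ φ : Y →L[𝕂] 𝕂, (fun j => φ (x j)) ∈ F.carrier}

/-- **Lemma 3.2, first part.**  If `F` is a strongly invariant sequence space over `𝕂`,
then for every `x ∈ Y^ℕ` with `x⁰ ≠ 0`: `x ∈ F^w(Y) ↔ x⁰ ∈ F^w(Y)`. -/
theorem weakSpace_mem_iff_zeroFree_mem {𝕂 Y : Type*} [RCLike 𝕂]
    [NormedAddCommGroup Y] [NormedSpace 𝕂 Y] [CompleteSpace Y]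
    (F : StronglyInvariantSeqSpace 𝕂 𝕂) (x : ℕ → Y) (hx : zeroFree x ≠ 0) :
    x ∈ weakSpace F.toInvariantSeqSpace Y ↔
      zeroFree x ∈ weakSpace F.toInvariantSeqSpace Y := by
  have hS : {j | x j ≠ 0}.Infinite := by
    by_contra h
    exact hx (by simp [zeroFree, h])
  have hzx : zeroFree x = fun k => x (Nat.nth (fun j => x j ≠ 0) k) := by
    simp [zeroFree, hS]
  constructor
  · intro hmem φ
    rw [hzx]
    exact (F.mem_iff_subseq _).mp (hmem φ) (Nat.nth (fun j => x j ≠ 0))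
      (Nat.nth_strictMono hS)
  · intro hmem φ
    set y : ℕ → 𝕂 := fun j => φ (x j) with hy
    by_cases hT : {j | y j ≠ 0}.Infinite
    · have hTsub : ∀ j, y j ≠ 0 → x j ≠ 0 := by
        intro j h hj
        exact h (by simp [hy, hj])
      set m : ℕ → ℕ :=
        fun k => Nat.count (fun j => x j ≠ 0) (Nat.nth (fun j => y j ≠ 0) k) with hm
      have hmono : StrictMono m := by
        intro k l hkl
        exact Nat.count_strict_mono
          (hTsub _ (Nat.nth_mem_of_infinite hT k)) (Nat.nth_strictMono hT hkl)
      have hzy : zeroFree y = fun k => φ (zeroFree x (m k)) := by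
        rw [hzx]
        funext k
        have hmem' : x (Nat.nth (fun j => y j ≠ 0) k) ≠ 0 :=
          hTsub _ (Nat.nth_mem_of_infinite hT k)
        simp only [zeroFree, hT, if_pos, hm]
        rw [Nat.nth_count hmem']
      have hznz : zeroFree y ≠ 0 := by
        intro h
        have h0 : zeroFree y 0 = y (Nat.nth (fun j => y j ≠ 0) 0) := by
          simp [zeroFree, hT]
        have := Nat.nth_mem_of_infinite hT 0
        exact this (by rw [← h0, h]; rfl)
      have hsub : zeroFree y ∈ F.carrier := by
        rw [hzy]
        exact (F.mem_iff_subseq _).mp (hmem φ) m hmono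
      exact (F.mem_iff_zeroFree_mem y hznz).mpr hsub
    · exact F.c00_subset y (Set.not_infinite.mp hT)
end

section
/- Let X and Y be Banach spaces over 𝕂 (= ℝ or ℂ), let Γ be a nonempty set, let E be an invariant sequence space over X, for each l ∈ Γ let E_l be a strongly invariant sequence space over Y, and let f : X → Y satisfy f(0) = 0. If x = (x_j)_{j=1}^∞ ∈ E satisfies (f(x_j))_{j=1}^∞ ∉ ⋃_{l∈Γ} E_l, then x has infinitely many nonzero coordinates (so x⁰ ≠ 0), x⁰ ∈ E, and writing x⁰ = (x_{j_k})_{k=1}^∞ one has (f(x_{j_k}))_{k=1}^∞ ∉ ⋃_{l∈Γ} E_l; that is, x⁰ ∈ G(E, f, (E_l)_{l∈Γ}). -/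
open scoped Classical

private lemma strictMono_eq_of_range_eq {a b : ℕ → ℕ} (ha : StrictMono a) (hb : StrictMono b)
    (h : Set.range a = Set.range b) : a = b := by
  have key : ∀ (a b : ℕ → ℕ), StrictMono a → StrictMono b →
      Set.range a = Set.range b → ∀ k, (∀ j < k, a j = b j) → a k ≤ b k := by
    intro a b ha hb h k ih
    have : b k ∈ Set.range a := h ▸ Set.mem_range_self k
    obtain ⟨i, hi⟩ := this
    rcases lt_or_ge i k with hik | hik
    · exfalso
      have : b i < b k := hb hik
      rw [← ih i hik, hi] at this
      exact lt_irrefl _ this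
    · calc a k ≤ a i := ha.monotone hik
        _ = b k := hi
  funext k
  induction k using Nat.strong_induction_on with
  | _ k ih =>
    exact le_antisymm (key a b ha hb h k ih)
      (key b a hb ha h.symm k (fun j hj => (ih j hj).symm))

/-- **Step 1 of the proof of Theorem 2.7.**  If `f 0 = 0` and
`x ∈ G(E, f, (E_l)_{l ∈ Γ})`, then `x` has infinitely many nonzero coordinates (so
`x⁰ ≠ 0`), `x⁰ ∈ E`, and `(f(x⁰_k))_k ∉ ⋃_l E_l`; that is, `x⁰ ∈ G(E, f, (E_l))`. -/
theorem zeroFree_mem_G {𝕂 X Y : Type*} [RCLike 𝕂]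
    [NormedAddCommGroup X] [NormedSpace 𝕂 X] [CompleteSpace X]
    [NormedAddCommGroup Y] [NormedSpace 𝕂 Y] [CompleteSpace Y]
    {Γ : Type*} [Nonempty Γ]
    (E : InvariantSeqSpace 𝕂 X) (El : Γ → StronglyInvariantSeqSpace 𝕂 Y)
    (f : X → Y) (hf0 : f 0 = 0) (x : ℕ → X) (hxE : x ∈ E.carrier)
    (hx : ∀ l : Γ, (fun j => f (x j)) ∉ (El l).carrier) :
    {j | x j ≠ 0}.Infinite ∧ zeroFree x ≠ 0 ∧ zeroFree x ∈ E.carrier ∧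
      ∀ l : Γ, (fun k => f (zeroFree x k)) ∉ (El l).carrier := by
  classical
  -- x has infinitely many nonzero coordinates
  have hinf : {j | x j ≠ 0}.Infinite := by
    by_contra hfin
    rw [Set.not_infinite] at hfin
    have hsub : {j | f (x j) ≠ 0} ⊆ {j | x j ≠ 0} := by
      intro j hj h0
      exact hj (by simp [Set.mem_setOf_eq, h0, hf0] at hj ⊢)
    exact hx (Classical.arbitrary Γ)
      ((El (Classical.arbitrary Γ)).c00_subset _ (hfin.subset hsub))
  set n : ℕ → ℕ := Nat.nth (fun j => x j ≠ 0) with hn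
  have hzx : zeroFree x = fun k => x (n k) := by
    rw [zeroFree, if_pos hinf]
  have hne : zeroFree x ≠ 0 := by
    intro h
    have h0 := congrFun h 0
    rw [hzx] at h0
    exact Nat.nth_mem_of_infinite hinf 0 h0
  refine ⟨hinf, hne, (E.mem_iff_zeroFree_mem x hne).mp hxE, ?_⟩
  intro l hq
  set g : ℕ → Y := fun j => f (x j) with hg
  have hq' : (fun k => g (n k)) ∈ (El l).carrier := by
    have : (fun k => f (zeroFree x k)) = fun k => g (n k) := by
      funext k; rw [hzx]
    rwa [this] at hq
  by_cases hgfin : {j | g j ≠ 0}.Finite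
  · exact hx l ((El l).c00_subset g hgfin)
  · have hginf : {j | g j ≠ 0}.Infinite := hgfin
    have hsubr : {j | g j ≠ 0} ⊆ Set.range n := by
      intro j hj
      have hxj : x j ≠ 0 := by
        intro h0
        exact hj (by simp [hg, h0, hf0])
      rw [hn, Nat.range_nth_of_infinite hinf]
      exact hxj
    set q : ℕ → Prop := fun k => g (n k) ≠ 0 with hqdef
    have himg : {j | g j ≠ 0} ⊆ n '' {k | q k} := by
      intro j hj
      obtain ⟨k, hk⟩ := hsubr hj
      exact ⟨k, by rw [hqdef]; simp only [Set.mem_setOf_eq]; rw [hk]; exact hj, hk⟩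
    have hqinf : {k | q k}.Infinite :=
      Set.Infinite.of_image n ((hginf.mono himg))
    have hnsm : StrictMono n := Nat.nth_strictMono hinf
    have hcomp : (fun k => n (Nat.nth q k)) = Nat.nth (fun j => g j ≠ 0) := by
      apply strictMono_eq_of_range_eq
      · exact hnsm.comp (Nat.nth_strictMono hqinf)
      · exact Nat.nth_strictMono hginf
      · rw [Nat.range_nth_of_infinite hginf]
        apply Set.eq_of_subset_of_subset
        · rintro j ⟨k, rfl⟩
          exact Nat.nth_mem_of_infinite hqinf k
        · intro j hj
          obtain ⟨k, hk, rfl⟩ := himg hj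
          obtain ⟨i, hi⟩ : k ∈ Set.range (Nat.nth q) := by
            rw [Nat.range_nth_of_infinite hqinf]; exact hk
          exact ⟨i, congrArg n hi⟩
    have hzq : zeroFree (fun k => g (n k)) = zeroFree g := by
      rw [zeroFree, zeroFree, if_pos hqinf, if_pos hginf]
      funext k
      exact congrArg g (congrFun hcomp k)
    have hgne : zeroFree g ≠ 0 := by
      intro h
      have h0 := congrFun h 0
      rw [zeroFree, if_pos hginf] at h0
      exact Nat.nth_mem_of_infinite hginf 0 h0
    have hmem : zeroFree (fun k => g (n k)) ∈ (El l).carrier := by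
      refine ((El l).mem_iff_zeroFree_mem _ ?_).mp hq'
      rw [hzq]; exact hgne
    rw [hzq] at hmem
    exact hx l (((El l).mem_iff_zeroFree_mem g hgne).mpr hmem)
end

section
/- Let X be a Banach space over 𝕂 (= ℝ or ℂ), let E be an invariant sequence space over X with constant K (from condition (b1)), and let x = (x_j)_{j=1}^∞ ∈ E have infinitely many nonzero coordinates, with x⁰ = (x_{j_k})_{k=1}^∞ ≠ 0. Let (ℕ_i)_{i=1}^∞ be a partition of ℕ into pairwise disjoint infinite sets, write ℕ_i = { i_1 < i_2 < ⋯ }, and for each i ∈ ℕ define y_i ∈ X^ℕ to be the sequence whose i_k-th coordinate equals x_{j_k} for every k ∈ ℕ and whose other coordinates are 0. Then: (i) y_i ∈ E for every i, with y_i⁰ = x⁰ and ‖y_i‖_E ≤ K‖x⁰‖_E; (ii) the set {y_1, y_2, …} is linearly independent; (iii) for every (a_i)_{i=1}^∞ ∈ ℓ_1 the series Σ_{i=1}^∞ a_i y_i converges in E; and (iv) the map T : ℓ_1 → E, T((a_i)_{i=1}^∞) = Σ_{i=1}^∞ a_i y_i, is a well-defined injective continuous linear operator. -/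
set_option maxHeartbeats 1000000


open scoped Classical

open Finset in
/-- **Step 2 of the proof of Theorem 2.7.**  Given `x ∈ E` with infinitely many nonzero
coordinates and a partition `(ℕ_i)` of `ℕ` into pairwise disjoint infinite sets
`ℕ_i = {i_1 < i_2 < ⋯}`, define `y_i` as the sequence whose `i_k`-th coordinate is
`x⁰_k` and whose other coordinates vanish.  Then (i) each `y_i ∈ E`, `y_i⁰ = x⁰` and
`‖y_i‖ ≤ K‖x⁰‖`; (ii) `{y_1, y_2, …}` is linearly independent; (iii) for every
`(a_i) ∈ ℓ_1` the series `Σ_i a_i y_i` converges in `E`; and (iv) the map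
`T : ℓ_1 → E`, `T((a_i)) = Σ_i a_i y_i`, is a well-defined injective continuous linear
operator. -/
theorem basic_sequences_and_operator {𝕂 X : Type*} [RCLike 𝕂]
    [NormedAddCommGroup X] [NormedSpace 𝕂 X] [CompleteSpace X]
    (E : InvariantSeqSpace 𝕂 X) (x : ℕ → X) (hxE : x ∈ E.carrier)
    (hxinf : {j | x j ≠ 0}.Infinite) (hx0 : zeroFree x ≠ 0)
    (N : ℕ → Set ℕ) (hNdisj : ∀ i i', i ≠ i' → Disjoint (N i) (N i'))
    (hNinf : ∀ i, (N i).Infinite) (hNcover : ⋃ i, N i = Set.univ)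
    (y : ℕ → ℕ → X)
    (hy₁ : ∀ i k : ℕ, y i (Nat.nth (· ∈ N i) k) = zeroFree x k)
    (hy₂ : ∀ i m : ℕ, m ∉ N i → y i m = 0) :
    (∀ i : ℕ, y i ∈ E.carrier ∧ zeroFree (y i) = zeroFree x ∧
        E.norm (y i) ≤ E.K * E.norm (zeroFree x)) ∧
    LinearIndependent 𝕂 y ∧
    (∀ a : lp (fun _ : ℕ => 𝕂) 1, ∃ s ∈ E.carrier, ∀ ε : ℝ, 0 < ε →
        ∃ M : ℕ, ∀ m ≥ M, E.norm ((∑ i ∈ range m, a i • y i) - s) < ε) ∧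
    ∃ T : lp (fun _ : ℕ => 𝕂) 1 → ℕ → X,
      (∀ a, T a ∈ E.carrier) ∧
      (∀ a, ∀ ε : ℝ, 0 < ε →
        ∃ M : ℕ, ∀ m ≥ M, E.norm ((∑ i ∈ range m, a i • y i) - T a) < ε) ∧
      (∀ a b, T (a + b) = T a + T b) ∧
      (∀ (c : 𝕂) (a), T (c • a) = c • T a) ∧
      Function.Injective T ∧
      ∃ C : ℝ, ∀ a, E.norm (T a) ≤ C * ‖a‖ := by
  classical
  set z := zeroFree x with hz_def
  have hz_apply : ∀ k, z k = x (Nat.nth (fun j => x j ≠ 0) k) := by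
    intro k; rw [hz_def, zeroFree, if_pos hxinf]
  have hz_ne : ∀ k, z k ≠ 0 := fun k => by
    rw [hz_apply]; exact Nat.nth_mem_of_infinite hxinf k
  have hzE : z ∈ E.carrier := (E.mem_iff_zeroFree_mem x hx0).mp hxE
  have hmem_nth : ∀ i k, Nat.nth (· ∈ N i) k ∈ N i := fun i k =>
    Nat.nth_mem_of_infinite (hNinf i) k
  have hy_ne : ∀ i m, y i m ≠ 0 ↔ m ∈ N i := by
    intro i m
    constructor
    · intro h
      by_contra hm
      exact h (hy₂ i m hm)
    · intro hm
      have hnc : Nat.nth (· ∈ N i) (Nat.count (· ∈ N i) m) = m := Nat.nth_count hm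
      rw [← hnc, hy₁]
      exact hz_ne _
  have hyinf : ∀ i, {m | y i m ≠ 0}.Infinite := by
    intro i
    have hset : {m | y i m ≠ 0} = N i := Set.ext fun m => hy_ne i m
    rw [hset]; exact hNinf i
  have hzy : ∀ i, zeroFree (y i) = z := by
    intro i
    funext k
    rw [zeroFree, if_pos (hyinf i)]
    have hpred : (fun m => y i m ≠ 0) = (· ∈ N i) := funext fun m => propext (hy_ne i m)
    rw [hpred, hy₁]
  have hzy_ne : ∀ i, zeroFree (y i) ≠ 0 := fun i => (hzy i) ▸ hx0
  have hyE : ∀ i, y i ∈ E.carrier := fun i =>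
    (E.mem_iff_zeroFree_mem (y i) (hzy_ne i)).mpr (by rw [hzy i]; exact hzE)
  have hynorm : ∀ i, E.norm (y i) ≤ E.K * E.norm z := fun i => by
    have h := E.norm_le_K_mul (y i) (hzy_ne i) (hyE i)
    rwa [hzy i] at h
  set C := E.K * E.norm z with hC
  have hC0 : 0 ≤ C := mul_nonneg E.K_pos.le (E.norm_nonneg z hzE)
  have hNi_eval : ∀ i i' k, i' ≠ i → y i' (Nat.nth (· ∈ N i) k) = 0 := by
    intro i i' k hne
    apply hy₂
    intro hmem
    exact Set.disjoint_left.mp (hNdisj i' i hne) hmem (hmem_nth i k)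
  have hlin : LinearIndependent 𝕂 y := by
    rw [linearIndependent_iff']
    intro s g hsum i hi
    have h0 := congrFun hsum (Nat.nth (· ∈ N i) 0)
    simp only [Finset.sum_apply, Pi.smul_apply, Pi.zero_apply] at h0
    rw [Finset.sum_eq_single i (fun b _ hb => by rw [hNi_eval i b 0 hb, smul_zero])
      (fun h => absurd hi h), hy₁] at h0
    by_contra hne
    apply hz_ne 0
    calc z 0 = (g i)⁻¹ • (g i • z 0) := by rw [smul_smul, inv_mul_cancel₀ hne, one_smul]
      _ = 0 := by rw [h0, smul_zero]
  have hmem_sum : ∀ (s : Finset ℕ) (g : ℕ → 𝕂), (∑ i ∈ s, g i • y i) ∈ E.carrier :=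
    fun s g => Submodule.sum_mem _ fun i _ => Submodule.smul_mem _ _ (hyE i)
  have hnorm_zero : E.norm 0 = 0 := (E.norm_eq_zero_iff 0 (zero_mem _)).mpr rfl
  have hnorm_sum : ∀ (s : Finset ℕ) (g : ℕ → 𝕂),
      E.norm (∑ i ∈ s, g i • y i) ≤ (∑ i ∈ s, ‖g i‖) * C := by
    intro s g
    induction s using Finset.cons_induction with
    | empty => simp [hnorm_zero]
    | cons a s ha ih =>
      rw [Finset.sum_cons, Finset.sum_cons, add_mul]
      refine (E.norm_add_le _ (Submodule.smul_mem _ _ (hyE a)) _ (hmem_sum s g)).trans ?_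
      refine add_le_add ?_ ih
      rw [E.norm_smul (g a) (y a) (hyE a)]
      exact mul_le_mul_of_nonneg_left (hynorm a) (norm_nonneg _)
  have hnorm_neg : ∀ v ∈ E.carrier, E.norm (-v) = E.norm v := by
    intro v hv
    have h := E.norm_smul (-1 : 𝕂) v hv
    simpa [neg_one_smul] using h
  -- existence of limits for each a ∈ ℓ¹
  have key : ∀ a : lp (fun _ : ℕ => 𝕂) 1,
      ∃ s, s ∈ E.carrier ∧ ∀ ε : ℝ, 0 < ε →
        ∃ M : ℕ, ∀ m ≥ M, E.norm ((∑ i ∈ Finset.range m, a i • y i) - s) < ε := by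
    intro a
    have hsummable : Summable (fun i => ‖a i‖) := by
      have h := (lp.memℓp a).summable (p := 1) (by norm_num)
      simpa using h
    set u : ℕ → ℕ → X := fun m => ∑ i ∈ Finset.range m, a i • y i with hu
    have huE : ∀ m, u m ∈ E.carrier := fun m => hmem_sum _ _
    set S : ℕ → ℝ := fun m => ∑ i ∈ Finset.range m, ‖a i‖ with hS
    have hkey : ∀ n m, n ≤ m → E.norm (u m - u n) ≤ (S m - S n) * C := by
      intro n m hnm
      have e : u m - u n = ∑ i ∈ Finset.Ico n m, a i • y i := by
        rw [hu]; simp only; rw [Finset.sum_Ico_eq_sub _ hnm]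
      have e2 : S m - S n = ∑ i ∈ Finset.Ico n m, ‖a i‖ := by
        rw [hS]; simp only; rw [Finset.sum_Ico_eq_sub _ hnm]
      rw [e, e2]
      exact hnorm_sum _ _
    have hcauchy : ∀ ε : ℝ, 0 < ε → ∃ Nn, ∀ m ≥ Nn, ∀ n ≥ Nn, E.norm (u m - u n) < ε := by
      intro ε hε
      have hc : CauchySeq S := hsummable.hasSum.tendsto_sum_nat.cauchySeq
      have hε' : 0 < ε / (C + 1) := by positivity
      obtain ⟨M, hM⟩ := Metric.cauchySeq_iff.mp hc (ε / (C + 1)) hε'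
      refine ⟨M, fun m hm n hn => ?_⟩
      have main : ∀ p q, M ≤ p → M ≤ q → q ≤ p → E.norm (u p - u q) < ε := by
        intro p q hp hq hqp
        have h1 : E.norm (u p - u q) ≤ (S p - S q) * C := hkey q p hqp
        have h2 : S p - S q ≤ dist (S p) (S q) := by
          rw [Real.dist_eq]; exact le_abs_self _
        have h3 : dist (S p) (S q) < ε / (C + 1) := hM p hp q hq
        have h4 : 0 ≤ S p - S q := by
          have e2 : S p - S q = ∑ i ∈ Finset.Ico q p, ‖a i‖ := by
            rw [hS]; simp only; rw [Finset.sum_Ico_eq_sub _ hqp]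
          rw [e2]; exact Finset.sum_nonneg fun i _ => norm_nonneg _
        calc E.norm (u p - u q) ≤ (S p - S q) * C := h1
          _ ≤ (S p - S q) * (C + 1) := by nlinarith
          _ < (ε / (C + 1)) * (C + 1) := by
              have hC1 : (0:ℝ) < C + 1 := by linarith
              exact mul_lt_mul_of_pos_right (lt_of_le_of_lt h2 h3) hC1
          _ = ε := by field_simp
      rcases le_total n m with h | h
      · exact main m n hm hn h
      · have e : u m - u n = -(u n - u m) := by abel
        rw [e, hnorm_neg _ (sub_mem (huE n) (huE m))]
        exact main n m hn hm h
    obtain ⟨s, hsE, hconv⟩ := E.complete u huE hcauchy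
    exact ⟨s, hsE, hconv⟩
  choose T hTE hTconv using key
  -- uniqueness of limits
  have huniq : ∀ (u : ℕ → ℕ → X), (∀ n, u n ∈ E.carrier) →
      ∀ z₁, z₁ ∈ E.carrier → ∀ z₂, z₂ ∈ E.carrier →
      (∀ ε : ℝ, 0 < ε → ∃ M, ∀ n ≥ M, E.norm (u n - z₁) < ε) →
      (∀ ε : ℝ, 0 < ε → ∃ M, ∀ n ≥ M, E.norm (u n - z₂) < ε) → z₁ = z₂ := by
    intro u hu z₁ h₁ z₂ h₂ hc₁ hc₂
    have hmem : z₁ - z₂ ∈ E.carrier := sub_mem h₁ h₂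
    have hlt : ∀ ε : ℝ, 0 < ε → E.norm (z₁ - z₂) < ε := by
      intro ε hε
      obtain ⟨M₁, hM₁⟩ := hc₁ (ε/2) (by linarith)
      obtain ⟨M₂, hM₂⟩ := hc₂ (ε/2) (by linarith)
      set n := max M₁ M₂ with hn
      have e : z₁ - z₂ = -(u n - z₁) + (u n - z₂) := by abel
      calc E.norm (z₁ - z₂) = E.norm (-(u n - z₁) + (u n - z₂)) := by rw [← e]
        _ ≤ E.norm (-(u n - z₁)) + E.norm (u n - z₂) :=
            E.norm_add_le _ (neg_mem (sub_mem (hu n) h₁)) _ (sub_mem (hu n) h₂)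
        _ = E.norm (u n - z₁) + E.norm (u n - z₂) := by
            rw [hnorm_neg _ (sub_mem (hu n) h₁)]
        _ < ε/2 + ε/2 := add_lt_add (hM₁ n (le_max_left _ _)) (hM₂ n (le_max_right _ _))
        _ = ε := by ring
    have h0 : E.norm (z₁ - z₂) ≤ 0 := by
      by_contra h
      push_neg at h
      exact absurd (hlt _ h) (lt_irrefl _)
    exact sub_eq_zero.mp
      ((E.norm_eq_zero_iff _ hmem).mp (le_antisymm h0 (E.norm_nonneg _ hmem)))
  -- coordinates of T a
  have hcoord : ∀ a i k, T a (Nat.nth (· ∈ N i) k) = a i • z k := by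
    intro a i k
    set j := Nat.nth (· ∈ N i) k with hj
    have heval : ∀ m, i < m → (∑ i' ∈ Finset.range m, a i' • y i') j = a i • z k := by
      intro m him
      rw [Finset.sum_apply]
      simp only [Pi.smul_apply]
      rw [Finset.sum_eq_single i (fun b _ hb => by rw [hNi_eval i b k hb, smul_zero])
        (fun h => absurd (Finset.mem_range.mpr him) h), hj, hy₁]
    have hlt : ∀ ε : ℝ, 0 < ε → ‖a i • z k - T a j‖ < ε := by
      intro ε hε
      obtain ⟨M, hM⟩ := hTconv a ε hε
      set m := max M (i+1) with hm
      have hn := hM m (le_max_left _ _)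
      have hle := E.coord_norm_le _ (sub_mem (hmem_sum (Finset.range m) (fun i => a i)) (hTE a)) j
      rw [Pi.sub_apply] at hle
      rw [heval m (lt_of_lt_of_le (Nat.lt_succ_self i) (le_max_right _ _))] at hle
      exact lt_of_le_of_lt hle hn
    have h0 : ‖a i • z k - T a j‖ ≤ 0 := by
      by_contra h
      push_neg at h
      exact absurd (hlt _ h) (lt_irrefl _)
    have := norm_eq_zero.mp (le_antisymm h0 (norm_nonneg _))
    exact (sub_eq_zero.mp this).symm
  -- additivity
  have hTadd : ∀ a b, T (a + b) = T a + T b := by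
    intro a b
    refine huniq (fun m => ∑ i ∈ Finset.range m, (a + b) i • y i)
      (fun m => hmem_sum _ _) _ (hTE (a + b)) _ (add_mem (hTE a) (hTE b))
      (hTconv (a + b)) ?_
    intro ε hε
    obtain ⟨M₁, h₁⟩ := hTconv a (ε/2) (by linarith)
    obtain ⟨M₂, h₂⟩ := hTconv b (ε/2) (by linarith)
    refine ⟨max M₁ M₂, fun m hm => ?_⟩
    have e : (∑ i ∈ Finset.range m, (a + b) i • y i) - (T a + T b)
        = ((∑ i ∈ Finset.range m, a i • y i) - T a)
          + ((∑ i ∈ Finset.range m, b i • y i) - T b) := by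
      have hcoe : ∀ i : ℕ, (a + b) i = a i + b i := fun i => by rw [lp.coeFn_add]; rfl
      simp_rw [hcoe, add_smul, Finset.sum_add_distrib]
      abel
    rw [e]
    calc E.norm _ ≤ E.norm ((∑ i ∈ Finset.range m, a i • y i) - T a)
          + E.norm ((∑ i ∈ Finset.range m, b i • y i) - T b) :=
        E.norm_add_le _ (sub_mem (hmem_sum _ _) (hTE a)) _ (sub_mem (hmem_sum _ _) (hTE b))
      _ < ε/2 + ε/2 := add_lt_add (h₁ m (le_trans (le_max_left _ _) hm))
          (h₂ m (le_trans (le_max_right _ _) hm))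
      _ = ε := by ring
  -- homogeneity
  have hTsmul : ∀ (c : 𝕂) (a), T (c • a) = c • T a := by
    intro c a
    refine huniq (fun m => ∑ i ∈ Finset.range m, (c • a) i • y i)
      (fun m => hmem_sum _ _) _ (hTE (c • a)) _ (Submodule.smul_mem _ _ (hTE a))
      (hTconv (c • a)) ?_
    intro ε hε
    have hε' : 0 < ε / (‖c‖ + 1) := by positivity
    obtain ⟨M, hM⟩ := hTconv a (ε / (‖c‖ + 1)) hε'
    refine ⟨M, fun m hm => ?_⟩
    have e : (∑ i ∈ Finset.range m, (c • a) i • y i) - c • T a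
        = c • ((∑ i ∈ Finset.range m, a i • y i) - T a) := by
      have hcoe : ∀ i : ℕ, (c • a) i = c * a i := fun i => by rw [lp.coeFn_smul]; rfl
      simp_rw [hcoe, smul_sub, Finset.smul_sum, smul_smul]
    rw [e, E.norm_smul c _ (sub_mem (hmem_sum _ _) (hTE a))]
    have hnn := E.norm_nonneg _ (sub_mem (hmem_sum (Finset.range m) (fun i => a i)) (hTE a))
    calc ‖c‖ * E.norm ((∑ i ∈ Finset.range m, a i • y i) - T a)
        ≤ (‖c‖ + 1) * E.norm ((∑ i ∈ Finset.range m, a i • y i) - T a) := by nlinarith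
      _ < (‖c‖ + 1) * (ε / (‖c‖ + 1)) := by
          have : (0:ℝ) < ‖c‖ + 1 := by positivity
          exact mul_lt_mul_of_pos_left (hM m hm) this
      _ = ε := by field_simp
  -- injectivity
  have hTinj : Function.Injective T := by
    intro a b hab
    have hcomp : ∀ i : ℕ, a i = b i := by
      intro i
      have ha := hcoord a i 0
      have hb := hcoord b i 0
      rw [hab, hb] at ha
      by_contra hne
      have hc : b i - a i ≠ 0 := sub_ne_zero.mpr fun h => hne h.symm
      apply hz_ne 0
      have h1 : (b i - a i) • z 0 = 0 := by rw [sub_smul, ha, sub_self]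
      calc z 0 = (b i - a i)⁻¹ • ((b i - a i) • z 0) := by
            rw [smul_smul, inv_mul_cancel₀ hc, one_smul]
        _ = 0 := by rw [h1, smul_zero]
    exact lp.ext (funext hcomp)
  -- boundedness
  have hpart : ∀ (a : lp (fun _ : ℕ => 𝕂) 1) (m : ℕ),
      ∑ i ∈ Finset.range m, ‖a i‖ ≤ ‖a‖ := by
    intro a m
    have h := lp.hasSum_norm (p := 1) (by norm_num) a
    simp only [ENNReal.toReal_one, Real.rpow_one] at h
    refine (Summable.sum_le_tsum _ (fun i _ => norm_nonneg _) h.summable).trans ?_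
    rw [h.tsum_eq]
  have hTbound : ∀ a, E.norm (T a) ≤ C * ‖a‖ := by
    intro a
    have hlt : ∀ ε : ℝ, 0 < ε → E.norm (T a) < C * ‖a‖ + ε := by
      intro ε hε
      obtain ⟨M, hM⟩ := hTconv a ε hε
      have e : T a = (∑ i ∈ Finset.range M, a i • y i)
          + -((∑ i ∈ Finset.range M, a i • y i) - T a) := by abel
      calc E.norm (T a)
          = E.norm ((∑ i ∈ Finset.range M, a i • y i)
            + -((∑ i ∈ Finset.range M, a i • y i) - T a)) := by rw [← e]
        _ ≤ E.norm (∑ i ∈ Finset.range M, a i • y i)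
            + E.norm (-((∑ i ∈ Finset.range M, a i • y i) - T a)) :=
            E.norm_add_le _ (hmem_sum _ _) _ (neg_mem (sub_mem (hmem_sum _ _) (hTE a)))
        _ = E.norm (∑ i ∈ Finset.range M, a i • y i)
            + E.norm ((∑ i ∈ Finset.range M, a i • y i) - T a) := by
            rw [hnorm_neg _ (sub_mem (hmem_sum _ _) (hTE a))]
        _ < E.norm (∑ i ∈ Finset.range M, a i • y i) + ε := by
            exact add_lt_add_right (hM M le_rfl) _
        _ ≤ (∑ i ∈ Finset.range M, ‖a i‖) * C + ε := by
            exact add_le_add_left (hnorm_sum _ _) _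
        _ ≤ ‖a‖ * C + ε := by
            exact add_le_add_left (mul_le_mul_of_nonneg_right (hpart a M) hC0) _
        _ = C * ‖a‖ + ε := by ring
    by_contra h
    push_neg at h
    have hε : 0 < (E.norm (T a) - C * ‖a‖) / 2 := by linarith
    have := hlt _ hε
    linarith
  exact ⟨fun i => ⟨hyE i, hzy i, hynorm i⟩, hlin,
    fun a => ⟨T a, hTE a, hTconv a⟩,
    T, hTE, hTconv, hTadd, hTsmul, hTinj, C, hTbound⟩
end

section
/- In ℓ_2, let (e_j)_{j=1}^∞ denote the canonical unit vector basis and let A = span{e_1} ∪ span{e_2, e_3} ∪ span{e_4, e_5, e_6} ∪ ⋯, i.e., A = ⋃_{n=1}^∞ span{ e_j : T_{n-1} < j ≤ T_n } where T_0 = 0 and T_n = 1 + 2 + ⋯ + n. Then A is not pointwise 2-lineable: e_1 ∈ A, but there is no 2-dimensional linear subspace V of ℓ_2 with e_1 ∈ V and V ⊆ A ∪ {0}. -/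
/-- The canonical unit vectors `e_j` of `ℓ_2 = lp (fun _ : ℕ => 𝕂) 2`. -/
noncomputable def unitVec (𝕂 : Type*) [RCLike 𝕂] (j : ℕ) : lp (fun _ : ℕ => 𝕂) 2 :=
  lp.single 2 j 1

/-- `T n = 1 + 2 + ⋯ + n`. -/
def triangular (n : ℕ) : ℕ := n * (n + 1) / 2

/-- The set `A = span{e_1} ∪ span{e_2, e_3} ∪ span{e_4, e_5, e_6} ∪ ⋯` in `ℓ_2`. -/
noncomputable def blockUnion (𝕂 : Type*) [RCLike 𝕂] : Set (lp (fun _ : ℕ => 𝕂) 2) :=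
  ⋃ n ∈ {n : ℕ | 1 ≤ n},
    (Submodule.span 𝕂
      {v | ∃ j : ℕ, triangular (n - 1) < j ∧ j ≤ triangular n ∧ v = unitVec 𝕂 j} :
        Set (lp (fun _ : ℕ => 𝕂) 2))

/-- Evaluation at a coordinate as a linear map. -/
noncomputable def evalL (𝕂 : Type*) [RCLike 𝕂] (k : ℕ) :
    lp (fun _ : ℕ => 𝕂) 2 →ₗ[𝕂] 𝕂 where
  toFun x := x k
  map_add' x y := rfl
  map_smul' c x := rfl

lemma one_le_triangular {m : ℕ} (hm : 1 ≤ m) : 1 ≤ triangular m := by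
  unfold triangular
  rw [Nat.le_div_iff_mul_le (by norm_num)]
  nlinarith

lemma span_block_coord_eq_zero {𝕂 : Type*} [RCLike 𝕂] {n k : ℕ}
    (hk : ¬ (triangular (n - 1) < k ∧ k ≤ triangular n))
    {x : lp (fun _ : ℕ => 𝕂) 2}
    (hx : x ∈ Submodule.span 𝕂
      {v | ∃ j : ℕ, triangular (n - 1) < j ∧ j ≤ triangular n ∧ v = unitVec 𝕂 j}) :
    x k = 0 := by
  have hle : Submodule.span 𝕂
      {v | ∃ j : ℕ, triangular (n - 1) < j ∧ j ≤ triangular n ∧ v = unitVec 𝕂 j}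
      ≤ LinearMap.ker (evalL 𝕂 k) := by
    rw [Submodule.span_le]
    rintro v ⟨j, h1, h2, rfl⟩
    have hkj : k ≠ j := by rintro rfl; exact hk ⟨h1, h2⟩
    simp only [SetLike.mem_coe, LinearMap.mem_ker]
    show unitVec 𝕂 j k = 0
    exact lp.single_apply_ne 2 j 1 hkj
  exact hle hx

lemma unitVec_apply_self {𝕂 : Type*} [RCLike 𝕂] (j : ℕ) : unitVec 𝕂 j j = 1 :=
  lp.single_apply_self 2 j 1

lemma unitVec_apply_ne {𝕂 : Type*} [RCLike 𝕂] {j k : ℕ} (h : k ≠ j) :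
    unitVec 𝕂 j k = 0 :=
  lp.single_apply_ne 2 j 1 h

/-- **Remark 3.9, second part.**  The set
`A = span{e_1} ∪ span{e_2, e_3} ∪ span{e_4, e_5, e_6} ∪ ⋯` is not pointwise
`2`-lineable: `e_1 ∈ A`, but no `2`-dimensional subspace `V` of `ℓ_2` satisfies
`e_1 ∈ V ⊆ A ∪ {0}`. -/
theorem blockUnion_not_pointwise_two_lineable (𝕂 : Type*) [RCLike 𝕂] :
    unitVec 𝕂 1 ∈ blockUnion 𝕂 ∧
      ¬ ∃ V : Submodule 𝕂 (lp (fun _ : ℕ => 𝕂) 2),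
        Module.finrank 𝕂 V = 2 ∧ unitVec 𝕂 1 ∈ V ∧
          (V : Set (lp (fun _ : ℕ => 𝕂) 2)) ⊆ blockUnion 𝕂 ∪ {0} := by
  have htri1 : triangular 1 = 1 := by decide
  have htri0 : triangular 0 = 0 := by decide
  have hmem1 : unitVec 𝕂 1 ∈ blockUnion 𝕂 := by
    rw [blockUnion]
    refine Set.mem_biUnion (show (1:ℕ) ∈ {n : ℕ | 1 ≤ n} by simp) ?_
    exact Submodule.subset_span ⟨1, by simp [htri0, htri1]⟩
  refine ⟨hmem1, ?_⟩
  rintro ⟨V, hdim, he, hsub⟩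
  -- block 1 is exactly {e 1}, so its span is span {e 1}
  have hblock1 : {v : lp (fun _ : ℕ => 𝕂) 2 |
      ∃ j : ℕ, triangular (1 - 1) < j ∧ j ≤ triangular 1 ∧ v = unitVec 𝕂 j}
      = {unitVec 𝕂 1} := by
    ext v
    simp only [Set.mem_setOf_eq, Set.mem_singleton_iff, htri0, htri1]
    constructor
    · rintro ⟨j, h1, h2, rfl⟩
      have : j = 1 := le_antisymm h2 h1
      rw [this]
    · rintro rfl; exact ⟨1, by norm_num⟩
  -- there exists v ∈ V not in span {e 1}
  have hexists : ∃ v ∈ V, v ∉ Submodule.span 𝕂 {unitVec 𝕂 1} := by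
    by_contra h
    push_neg at h
    have hle : V ≤ Submodule.span 𝕂 {unitVec 𝕂 1} := fun x hx => h x hx
    have hfin : Module.Finite 𝕂 (Submodule.span 𝕂 {unitVec 𝕂 1}) := by
      infer_instance
    have h1 := Submodule.finrank_mono (R := 𝕂) hle
    have hene : unitVec 𝕂 1 ≠ 0 := by
      intro h
      have h1 : unitVec 𝕂 1 1 = (0 : lp (fun _ : ℕ => 𝕂) 2) 1 := by rw [h]
      rw [unitVec_apply_self] at h1
      simp [lp.coeFn_zero] at h1
    have h2 : Module.finrank 𝕂 (Submodule.span 𝕂 {unitVec 𝕂 1}) ≤ 1 :=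
      le_of_eq (finrank_span_singleton hene)
    omega
  obtain ⟨v, hvV, hvsp⟩ := hexists
  have hvne : v ≠ 0 := by rintro rfl; exact hvsp (Submodule.zero_mem _)
  -- v ∈ blockUnion
  have hvA : v ∈ blockUnion 𝕂 := by
    rcases hsub hvV with h | h
    · exact h
    · exact absurd h hvne
  rw [blockUnion] at hvA
  simp only [Set.mem_iUnion, SetLike.mem_coe, Set.mem_setOf_eq] at hvA
  obtain ⟨n, hn1, hvn⟩ := hvA
  -- n ≥ 2, else v ∈ span {e 1}
  have hn2 : 2 ≤ n := by
    rcases Nat.lt_or_ge n 2 with h | h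
    · interval_cases n
      · rw [hblock1] at hvn
        exact absurd hvn hvsp
    · exact h
  -- coordinate 1 of v is zero
  have hT : 1 ≤ triangular (n - 1) := one_le_triangular (by omega)
  have hv1 : v 1 = 0 :=
    span_block_coord_eq_zero (by omega) hvn
  -- v has a nonzero coordinate k, necessarily k ≠ 1
  have hvk : ∃ k, v k ≠ 0 := by
    by_contra h
    push_neg at h
    apply hvne
    apply lp.ext
    funext k
    exact h k
  obtain ⟨k, hk⟩ := hvk
  have hk1 : k ≠ 1 := by rintro rfl; exact hk hv1
  -- w = e 1 + v
  set w : lp (fun _ : ℕ => 𝕂) 2 := unitVec 𝕂 1 + v with hw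
  have hwV : w ∈ V := V.add_mem he hvV
  have hw1 : w 1 = 1 := by
    have : w 1 = unitVec 𝕂 1 1 + v 1 := by rw [hw, lp.coeFn_add]; rfl
    rw [this, unitVec_apply_self, hv1, add_zero]
  have hwk : w k = v k := by
    have : w k = unitVec 𝕂 1 k + v k := by rw [hw, lp.coeFn_add]; rfl
    rw [this, unitVec_apply_ne hk1, zero_add]
  have hwne : w ≠ 0 := by
    intro h
    rw [h] at hw1
    simp [lp.coeFn_zero] at hw1
  have hwA : w ∈ blockUnion 𝕂 := by
    rcases hsub hwV with h | h
    · exact h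
    · exact absurd h hwne
  rw [blockUnion] at hwA
  simp only [Set.mem_iUnion, SetLike.mem_coe, Set.mem_setOf_eq] at hwA
  obtain ⟨m, hm1, hwm⟩ := hwA
  -- since w 1 ≠ 0, m = 1
  have hm : m = 1 := by
    by_contra h
    have hm2 : 2 ≤ m := by omega
    have hTm : 1 ≤ triangular (m - 1) := one_le_triangular (by omega)
    have : w 1 = 0 := span_block_coord_eq_zero (by omega) hwm
    rw [hw1] at this
    exact one_ne_zero this
  subst hm
  -- then w k = 0, contradicting w k = v k ≠ 0
  have : w k = 0 := by
    apply span_block_coord_eq_zero (n := 1) ?_ hwm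
    rw [htri0, htri1]
    omega
  rw [hwk] at this
  exact hk this
end
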